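/- arXiv:0906.0154 — 5 statements merged into one kernel-verified Lean document; each statement's English description precedes it below -/
import Mathlib

section
/- Let Σ be a connected (X,2)-arc-transitive graph of valency v ≥ 3 and let Δ be a self-paired X-orbit on Arc₃(Σ) with ℓ₁(Δ) = 1. If X acts faithfully on V(Σ), then for every vertex τ of Σ the stabilizer X_τ acts faithfully on the neighbourhood Σ(τ). -/
open Pointwise

/-- A 2-arc `(t.1, t.2.1, t.2.2)` of a simple graph. -/
def IsArc2 {V : Type*} (G : SimpleGraph V) (t : V × V × V) : Prop :=
  G.Adj t.1 t.2.1 ∧ G.Adj t.2.1 t.2.2 ∧ t.1 ≠ t.2.2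

/-- A 3-arc `(t.1, t.2.1, t.2.2.1, t.2.2.2)` of a simple graph. -/
def IsArc3 {V : Type*} (G : SimpleGraph V) (t : V × V × V × V) : Prop :=
  G.Adj t.1 t.2.1 ∧ G.Adj t.2.1 t.2.2.1 ∧ G.Adj t.2.2.1 t.2.2.2 ∧
    t.1 ≠ t.2.2.1 ∧ t.2.1 ≠ t.2.2.2

/-- The reverse of a 3-arc. -/
def rev3 {V : Type*} (t : V × V × V × V) : V × V × V × V :=
  (t.2.2.2, t.2.2.1, t.2.1, t.1)

/-- `G` is regular of valency `d`. -/
def Regular {V : Type*} (G : SimpleGraph V) (d : ℕ) : Prop :=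
  ∀ u : V, (G.neighborSet u).ncard = d

/-- The action of `X` preserves the adjacency of `G`. -/
def AdjPres (X : Type*) {V : Type*} [Group X] [MulAction X V] (G : SimpleGraph V) : Prop :=
  ∀ (x : X) (u w : V), G.Adj u w → G.Adj (x • u) (x • w)

/-- `X` is transitive on the vertices. -/
def VertexTrans (X V : Type*) [Group X] [MulAction X V] : Prop :=
  ∀ u w : V, ∃ x : X, x • u = w

/-- `X` is transitive on the arcs of `G`. -/
def ArcTrans (X : Type*) {V : Type*} [Group X] [MulAction X V] (G : SimpleGraph V) : Prop :=
  ∀ a b : V × V, G.Adj a.1 a.2 → G.Adj b.1 b.2 → ∃ x : X, x • a = b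

/-- `G` is `X`-symmetric. -/
def XSymm (X : Type*) {V : Type*} [Group X] [MulAction X V] (G : SimpleGraph V) : Prop :=
  AdjPres X G ∧ VertexTrans X V ∧ ArcTrans X G

/-- `X` is transitive on the 2-arcs of `G`. -/
def Arc2Trans (X : Type*) {V : Type*} [Group X] [MulAction X V] (G : SimpleGraph V) : Prop :=
  ∀ s t : V × V × V, IsArc2 G s → IsArc2 G t → ∃ x : X, x • s = t

/-- `X` is transitive on the 3-arcs of `G`. -/
def Arc3Trans (X : Type*) {V : Type*} [Group X] [MulAction X V] (G : SimpleGraph V) : Prop :=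
  ∀ s t : V × V × V × V, IsArc3 G s → IsArc3 G t → ∃ x : X, x • s = t

/-- `G` is `(X,2)`-arc-transitive. -/
def Arc2TransGraph (X : Type*) {V : Type*} [Group X] [MulAction X V] (G : SimpleGraph V) : Prop :=
  XSymm X G ∧ Arc2Trans X G

/-- `X` is regular on the 2-arcs of `G`, i.e. `G` is `(X,2)`-arc-regular
(together with `X`-symmetry). -/
def Arc2Reg (X : Type*) {V : Type*} [Group X] [MulAction X V] (G : SimpleGraph V) : Prop :=
  XSymm X G ∧ ∀ s t : V × V × V, IsArc2 G s → IsArc2 G t → ∃! x : X, x • s = t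

/-- `Δ` is a self-paired `X`-orbit on the set of 3-arcs of `G`. -/
def SelfPairedOrbit3 (X : Type*) {V : Type*} [Group X] [MulAction X V] (G : SimpleGraph V)
    (Δ : Set (V × V × V × V)) : Prop :=
  (∀ t ∈ Δ, IsArc3 G t) ∧ (∃ t₀ ∈ Δ, Δ = MulAction.orbit X t₀) ∧ ∀ t ∈ Δ, rev3 t ∈ Δ

/-- `ℓ₁(Δ) = k`:  for each `(τ₁,τ,σ,σ₁) ∈ Δ`, the orbit of `σ₁` under the pointwise
stabilizer of `(τ₁,τ,σ)` in `X` has exactly `k` elements. -/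
def Ell1Eq (X : Type*) {V : Type*} [Group X] [MulAction X V]
    (Δ : Set (V × V × V × V)) (k : ℕ) : Prop :=
  ∀ t ∈ Δ, ({u : V | ∃ x : X, x • t.1 = t.1 ∧ x • t.2.1 = t.2.1 ∧
    x • t.2.2.1 = t.2.2.1 ∧ x • t.2.2.2 = u}).ncard = k

/-- Let `G` be a connected `(X,2)`-arc-transitive graph of valency `v ≥ 3`
and `Δ` a self-paired `X`-orbit on the 3-arcs of `G` with `ℓ₁(Δ) = 1`.  If `X` acts
faithfully on the vertices, then every vertex stabilizer acts faithfully on the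
corresponding neighbourhood. -/
theorem stabilizer_faithful_on_neighborhood {V X : Type*} [Fintype V] [Group X] [MulAction X V]
    (G : SimpleGraph V) (v : ℕ) (hv : 3 ≤ v) (hreg : Regular G v)
    (hconn : G.Connected) (h2at : Arc2TransGraph X G)
    (Δ : Set (V × V × V × V)) (hΔ : SelfPairedOrbit3 X G Δ) (hℓ : Ell1Eq X Δ 1)
    (hfaith : ∀ x : X, (∀ u : V, x • u = u) → x = 1) :
    ∀ (τ : V) (x : X), x • τ = τ → (∀ σ : V, G.Adj τ σ → x • σ = σ) → x = 1 := by
  intro τ x hτ hnbr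
  obtain ⟨⟨hAdjP, hVT, hAT⟩, h2T⟩ := h2at
  obtain ⟨hΔ3, ⟨t', ht'Δ, hΔorb⟩, hΔsp⟩ := hΔ
  have ht'3 := hΔ3 t' ht'Δ
  -- key step: a "fully fixed" vertex spreads to its neighbours
  have key : ∀ σ : V, (x • σ = σ ∧ ∀ w, G.Adj σ w → x • w = w) →
      ∀ σ', G.Adj σ σ' → (x • σ' = σ' ∧ ∀ w, G.Adj σ' w → x • w = w) := by
    intro σ ⟨hσ, hσnbr⟩ σ' hadj
    have hσ' : x • σ' = σ' := hσnbr σ' hadj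
    refine ⟨hσ', fun w hw => ?_⟩
    by_cases hwσ : w = σ
    · exact hwσ ▸ hσ
    · obtain ⟨g, hg⟩ := h2T (t'.1, t'.2.1, t'.2.2.1) (w, σ', σ)
        ⟨ht'3.1, ht'3.2.1, ht'3.2.2.2.1⟩ ⟨hw.symm, hadj.symm, hwσ⟩
      simp only [Prod.smul_def, Prod.mk.injEq, Prod.ext_iff] at hg
      obtain ⟨hg1, hg2, hg3⟩ := hg
      have hgt' : g • t' = (w, σ', σ, g • t'.2.2.2) := by
        rw [Prod.ext_iff, Prod.ext_iff, Prod.ext_iff]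
        exact ⟨hg1, hg2, hg3, rfl⟩
      have hmem : g • t' ∈ Δ := by
        rw [hΔorb] at ht'Δ ⊢
        obtain ⟨h, hh⟩ := ht'Δ
        exact ⟨g * h, by show (g * h) • t' = g • t'; rw [mul_smul, show h • t' = t' from hh]⟩
      set u := g • t'.2.2.2 with hu
      have h3 : IsArc3 G (w, σ', σ, u) := hgt' ▸ hΔ3 _ hmem
      have hmemrev : (u, σ, σ', w) ∈ Δ := by
        have := hΔsp _ hmem
        rwa [hgt'] at this
      have hufix : x • u = u := hσnbr u h3.2.2.1
      have hcard := hℓ _ hmemrev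
      obtain ⟨a, ha⟩ := Set.ncard_eq_one.mp hcard
      have hw1 : w ∈ ({z : V | ∃ y : X, y • u = u ∧ y • σ = σ ∧ y • σ' = σ' ∧ y • w = z}) :=
        ⟨1, one_smul _ _, one_smul _ _, one_smul _ _, one_smul _ _⟩
      have hw2 : x • w ∈ ({z : V | ∃ y : X, y • u = u ∧ y • σ = σ ∧ y • σ' = σ' ∧ y • w = z}) :=
        ⟨x, hufix, hσ, hσ', rfl⟩
      rw [ha] at hw1 hw2
      rw [hw2, hw1]
  -- propagate along walks
  have main : ∀ (a b : V) (p : G.Walk a b), (x • a = a ∧ ∀ w, G.Adj a w → x • w = w) →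
      (x • b = b ∧ ∀ w, G.Adj b w → x • w = w) := by
    intro a b p
    induction p with
    | nil => exact id
    | cons h p ih => intro hFa; exact ih (key _ hFa _ h)
  exact hfaith x fun u => (main τ u (hconn.preconnected τ u).some ⟨hτ, hnbr⟩).1
end

section
/- Let Σ be a connected (X,2)-arc-transitive graph of valency v ≥ 3 with X acting faithfully on V(Σ), and let Δ be a self-paired X-orbit on Arc₃(Σ) with ℓ₁(Δ) = 1. Then there exist an integer n ≥ girth(Σ) and an X-orbit E of n-cycles of Σ such that every 2-path of Σ is contained in a unique member of E, and either Σ is isomorphic to the complete graph K_{v+1} on v+1 vertices, or girth(Σ) ≥ 4 and Σ is a near n-gonal graph with respect to E. -/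
open Pointwise

/-- The arc set of the cycle traced by `c : ZMod n → V`. -/
def cycleArcSet {V : Type*} (n : ℕ) (c : ZMod n → V) : Set (V × V) :=
  {p | ∃ i : ZMod n, p = (c i, c (i + 1)) ∨ p = (c (i + 1), c i)}

/-- `S` is (the arc set of) an `n`-cycle of `G`. -/
def IsNCycleSet {V : Type*} (G : SimpleGraph V) (n : ℕ) (S : Set (V × V)) : Prop :=
  ∃ c : ZMod n → V, Function.Injective c ∧ (∀ i, G.Adj (c i) (c (i + 1))) ∧ S = cycleArcSet n c

/-- The vertex set of a cycle given by its arc set. -/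
def cycVerts {V : Type*} (S : Set (V × V)) : Set V := {u | ∃ w, (u, w) ∈ S}

/-- The 3-arcs of a cycle given by its arc set. -/
def cycArc3 {V : Type*} (S : Set (V × V)) : Set (V × V × V × V) :=
  {t | (t.1, t.2.1) ∈ S ∧ (t.2.1, t.2.2.1) ∈ S ∧ (t.2.2.1, t.2.2.2) ∈ S ∧
    t.1 ≠ t.2.2.1 ∧ t.2.1 ≠ t.2.2.2}

/-- The disjoint union `mC_n` of `m` cycles of length `n`. -/
def mCycles (m n : ℕ) : SimpleGraph (Fin m × ZMod n) :=
  SimpleGraph.fromRel (fun p q => p.1 = q.1 ∧ q.2 = p.2 + 1)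

/-- `E` is an `X`-orbit (on sets of arcs, e.g. on `n`-cycles). -/
def XOrbitOfArcSets (X : Type*) {V : Type*} [Group X] [MulAction X V]
    (E : Set (Set (V × V))) : Prop :=
  ∃ S₀ ∈ E, E = MulAction.orbit X S₀

/-- The permutation group induced on the vertex set of a cycle (with arc set `S`) by the
setwise stabilizer in `X` of the cycle. -/
def inducedCyclePerms (X : Type*) {V : Type*} [Group X] [MulAction X V] (S : Set (V × V)) :
    Subgroup (Equiv.Perm ↥(cycVerts S)) where
  carrier := {e | ∃ x : X, x • S = S ∧ ∀ u : ↥(cycVerts S), (e u : V) = x • (u : V)}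
  one_mem' := ⟨1, one_smul _ _, fun u => by simp⟩
  mul_mem' := by
    rintro e f ⟨x, hxS, hx⟩ ⟨y, hyS, hy⟩
    refine ⟨x * y, by rw [mul_smul, hyS, hxS], fun u => ?_⟩
    rw [Equiv.Perm.mul_apply, hx, hy, mul_smul]
  inv_mem' := by
    rintro e ⟨x, hxS, hx⟩
    refine ⟨x⁻¹, inv_smul_eq_iff.mpr hxS.symm, fun u => ?_⟩
    have h := hx (e⁻¹ u)
    rw [show e (e⁻¹ u) = u from e.apply_symm_apply u] at h
    rw [eq_inv_smul_iff]
    exact h.symm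

/-- `G` is a near `n`-gonal graph with respect to the set `E` of `n`-cycles. -/
def NearNGonal {V : Type*} (G : SimpleGraph V) (n : ℕ) (E : Set (Set (V × V))) : Prop :=
  G.Connected ∧ 4 ≤ G.girth ∧ (∀ S ∈ E, IsNCycleSet G n S) ∧
    ∀ t : V × V × V, IsArc2 G t →
      ∃! S : Set (V × V), S ∈ E ∧ (t.1, t.2.1) ∈ S ∧ (t.2.1, t.2.2) ∈ S


namespace NearNGonalAux

variable {V : Type*} {G : SimpleGraph V}

def walkOfFn (G : SimpleGraph V) (f : ℕ → V) :
    (k : ℕ) → (∀ i < k, G.Adj (f i) (f (i+1))) → G.Walk (f 0) (f k)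
  | 0, _ => SimpleGraph.Walk.nil
  | (k+1), h =>
      (walkOfFn G f k fun i hi => h i (Nat.lt_succ_of_lt hi)).concat (h k (Nat.lt_succ_self k))

lemma walkOfFn_support (f : ℕ → V) (k : ℕ) (h : ∀ i < k, G.Adj (f i) (f (i+1))) :
    (walkOfFn G f k h).support = (List.range (k+1)).map f := by
  induction k with
  | zero => simp [walkOfFn, List.range_succ]
  | succ k ih => simp [walkOfFn, ih, List.range_succ, List.concat_eq_append]

lemma walkOfFn_edges (f : ℕ → V) (k : ℕ) (h : ∀ i < k, G.Adj (f i) (f (i+1))) :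
    (walkOfFn G f k h).edges = (List.range k).map (fun i => s(f i, f (i+1))) := by
  induction k with
  | zero => simp [walkOfFn, List.range_succ]
  | succ k ih => simp [walkOfFn, ih, List.range_succ, List.concat_eq_append]

lemma walkOfFn_length (f : ℕ → V) (k : ℕ) (h : ∀ i < k, G.Adj (f i) (f (i+1))) :
    (walkOfFn G f k h).length = k := by
  induction k with
  | zero => rfl
  | succ k ih => simp [walkOfFn, ih]

end NearNGonalAux

open NearNGonalAux in
/-- If `G` is a connected `(X,2)`-arc-transitive graph of valency `v ≥ 3`,
`X` is faithful on the vertices, and `Δ` is a self-paired `X`-orbit on the 3-arcs with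
`ℓ₁(Δ) = 1`, then there are an integer `n ≥ girth(G)` and an `X`-orbit `E` of `n`-cycles
of `G` such that every 2-path of `G` lies in a unique member of `E`, and either
`G ≅ K_{v+1}` or `girth(G) ≥ 4` and `G` is a near `n`-gonal graph with respect to `E`. -/
theorem nearNGonal_of_ell1_eq_one {V X : Type*} [Fintype V] [Group X] [MulAction X V]
    (G : SimpleGraph V) (v : ℕ) (hv : 3 ≤ v) (hreg : Regular G v)
    (hconn : G.Connected) (h2at : Arc2TransGraph X G)
    (hfaith : ∀ x : X, (∀ u : V, x • u = u) → x = 1)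
    (Δ : Set (V × V × V × V)) (hΔ : SelfPairedOrbit3 X G Δ) (hℓ : Ell1Eq X Δ 1) :
    ∃ (n : ℕ) (E : Set (Set (V × V))),
      G.girth ≤ n ∧
      (∀ S ∈ E, IsNCycleSet G n S) ∧ XOrbitOfArcSets X E ∧
      (∀ t : V × V × V, IsArc2 G t →
        ∃! S : Set (V × V), S ∈ E ∧ (t.1, t.2.1) ∈ S ∧ (t.2.1, t.2.2) ∈ S) ∧
      (Nonempty (G ≃g (⊤ : SimpleGraph (Fin (v + 1)))) ∨
        (4 ≤ G.girth ∧ NearNGonal G n E)) := by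
    classical
  obtain ⟨⟨hA, hVT, hAT⟩, h2T⟩ := h2at
  obtain ⟨harc3, ⟨t₀, ht₀, horb⟩, hsp⟩ := hΔ
  have hsmul4 : ∀ (x : X) (a b c d : V), x • ((a,b,c,d) : V×V×V×V) = (x•a, x•b, x•c, x•d) :=
    fun x a b c d => rfl
  have hsmul3 : ∀ (x : X) (a b c : V), x • ((a,b,c) : V×V×V) = (x•a, x•b, x•c) :=
    fun x a b c => rfl
  have hinv : ∀ (x : X) (t : V × V × V × V), t ∈ Δ → x • t ∈ Δ := by
    intro x t ht
    rw [horb, MulAction.mem_orbit_iff] at ht ⊢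
    obtain ⟨y, hy⟩ := ht
    exact ⟨x * y, by rw [mul_smul, hy]⟩
  -- unique Δ-extension of any 2-arc
  have hext : ∀ a b c : V, IsArc2 G (a, b, c) → ∃! d, ((a, b, c, d) : V×V×V×V) ∈ Δ := by
    intro a b c h2
    obtain ⟨adj01, adj12, _, ne02, _⟩ := harc3 t₀ ht₀
    obtain ⟨x, hx⟩ := h2T (t₀.1, t₀.2.1, t₀.2.2.1) (a,b,c) ⟨adj01, adj12, ne02⟩ h2
    simp only [hsmul3, Prod.mk.injEq] at hx
    obtain ⟨hx1, hx2, hx3⟩ := hx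
    have hmem : ((a, b, c, x • t₀.2.2.2) : V×V×V×V) ∈ Δ := by
      have h' := hinv x t₀ ht₀
      have : x • t₀ = ((a, b, c, x • t₀.2.2.2) : V×V×V×V) := by
        rw [show t₀ = ((t₀.1, t₀.2.1, t₀.2.2.1, t₀.2.2.2) : V×V×V×V) from rfl, hsmul4,
          hx1, hx2, hx3]
      rwa [this] at h'
    refine ⟨x • t₀.2.2.2, hmem, ?_⟩
    intro d' hd'
    have h1 := hmem
    rw [horb, MulAction.mem_orbit_iff] at h1 hd'
    obtain ⟨g1, hg1⟩ := h1
    obtain ⟨g2, hg2⟩ := hd'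
    have hz : (g2 * g1⁻¹) • ((a,b,c,x • t₀.2.2.2) : V×V×V×V) = ((a,b,c,d') : V×V×V×V) := by
      rw [mul_smul, ← hg1, inv_smul_smul, hg2]
    rw [hsmul4, Prod.mk.injEq, Prod.mk.injEq, Prod.mk.injEq] at hz
    obtain ⟨hz1, hz2, hz3, hz4⟩ := hz
    obtain ⟨e, he⟩ := Set.ncard_eq_one.mp (hℓ (a, b, c, x • t₀.2.2.2) hmem)
    have m1 : x • t₀.2.2.2 ∈ {u : V | ∃ z : X, z • a = a ∧ z • b = b ∧ z • c = c ∧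
        z • (x • t₀.2.2.2) = u} := ⟨1, by simp⟩
    have m2 : d' ∈ {u : V | ∃ z : X, z • a = a ∧ z • b = b ∧ z • c = c ∧
        z • (x • t₀.2.2.2) = u} := ⟨g2 * g1⁻¹, hz1, hz2, hz3, hz4⟩
    rw [he] at m1 m2
    rw [Set.mem_singleton_iff] at m1 m2
    rw [m1, m2]
  -- the shunt
  obtain ⟨a₀, a₁, a₂, a₃⟩ := t₀
  obtain ⟨adj01, adj12, adj23, ne02, ne13⟩ := harc3 _ ht₀
  obtain ⟨g, hg⟩ := h2T (a₀,a₁,a₂) (a₁,a₂,a₃) ⟨adj01, adj12, ne02⟩ ⟨adj12, adj23, ne13⟩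
  simp only [hsmul3, Prod.mk.injEq] at hg
  obtain ⟨hg0, hg1, hg2⟩ := hg
  set σ : ℤ → V := fun i => g ^ i • a₀ with hσdef
  have hσadd : ∀ i k : ℤ, σ (i + k) = g ^ i • σ k := by
    intro i k
    simp only [hσdef, zpow_add, mul_smul]
  have hσ0 : σ 0 = a₀ := by simp [hσdef]
  have hσ1 : σ 1 = a₁ := by simp [hσdef, hg0]
  have hσ2 : σ 2 = a₂ := by
    have : σ 2 = g ^ (1:ℤ) • σ 1 := by rw [← hσadd]; norm_num
    rw [this, hσ1, zpow_one, hg1]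
  have hσ3 : σ 3 = a₃ := by
    have : σ 3 = g ^ (1:ℤ) • σ 2 := by rw [← hσadd]; norm_num
    rw [this, hσ2, zpow_one, hg2]
  have hΔσ : ∀ i : ℤ, ((σ i, σ (i+1), σ (i+2), σ (i+3)) : V×V×V×V) ∈ Δ := by
    intro i
    have e0 : σ i = g ^ i • σ 0 := by rw [← hσadd, add_zero]
    have e1 := hσadd i 1
    have e2 := hσadd i 2
    have e3 := hσadd i 3
    have : ((σ i, σ (i+1), σ (i+2), σ (i+3)) : V×V×V×V) = g ^ i • ((a₀,a₁,a₂,a₃) : V×V×V×V) := by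
      rw [hsmul4, e0, e1, e2, e3, hσ0, hσ1, hσ2, hσ3]
    rw [this]
    exact hinv _ _ ht₀
  have hadjσ : ∀ i : ℤ, G.Adj (σ i) (σ (i+1)) := fun i => (harc3 _ (hΔσ i)).1
  have hneσ2 : ∀ i : ℤ, σ i ≠ σ (i+2) := fun i => (harc3 _ (hΔσ i)).2.2.2.1
  have hcancel : ∀ (k i j : ℤ), σ (k + i) = σ (k + j) ↔ σ i = σ j := by
    intro k i j
    rw [hσadd, hσadd]
    exact smul_left_cancel_iff _
  -- existence of a positive period
  have hP : ∃ m : ℕ, 0 < m ∧ σ (m : ℤ) = σ 0 := by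
    obtain ⟨i₀, j₀, hne, heq⟩ := Finite.exists_ne_map_eq_of_infinite (fun k : ℕ => σ (k : ℤ))
    rcases hne.lt_or_gt with hlt | hlt
    · refine ⟨j₀ - i₀, by omega, ?_⟩
      have := (hcancel (i₀ : ℤ) ((j₀ - i₀ : ℕ) : ℤ) 0).mp ?_
      · exact this
      · rw [add_zero, show (i₀ : ℤ) + ((j₀ - i₀ : ℕ) : ℤ) = (j₀ : ℤ) by push_cast; omega]
        exact heq.symm
    · refine ⟨i₀ - j₀, by omega, ?_⟩
      have := (hcancel (j₀ : ℤ) ((i₀ - j₀ : ℕ) : ℤ) 0).mp ?_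
      · exact this
      · rw [add_zero, show (j₀ : ℤ) + ((i₀ - j₀ : ℕ) : ℤ) = (i₀ : ℤ) by push_cast; omega]
        exact heq
  set n : ℕ := Nat.find hP with hndef
  obtain ⟨hnpos, hnper⟩ : 0 < n ∧ σ (n : ℤ) = σ 0 := Nat.find_spec hP
  have hmin : ∀ m : ℕ, m < n → ¬ (0 < m ∧ σ (m : ℤ) = σ 0) := fun m hm => Nat.find_min hP hm
  -- periodicity
  have hstab : ∀ m : ℤ, g ^ ((n:ℤ) * m) • a₀ = a₀ := by
    intro m
    have h1 : g ^ (n:ℤ) ∈ MulAction.stabilizer X a₀ := by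
      rw [MulAction.mem_stabilizer_iff]
      have := hnper
      rw [hσ0] at this
      exact this
    have h2 := zpow_mem h1 m
    rw [← zpow_mul] at h2
    exact h2
  have hperiod : ∀ i m : ℤ, σ (i + (n:ℤ) * m) = σ i := by
    intro i m
    rw [hσadd]
    show g ^ i • (g ^ ((n:ℤ) * m) • a₀) = σ i
    rw [hstab]
  have hmodkey : ∀ i j : ℤ, σ i = σ j ↔ (n:ℤ) ∣ (i - j) := by
    intro i j
    constructor
    · intro h
      have h0 : σ (i - j) = σ 0 := by
        have h' := (hcancel j (i - j) 0).mp
        rw [show j + (i - j) = i by ring, add_zero] at h'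
        exact h' h
      have hr0 : 0 ≤ (i - j) % (n:ℤ) := Int.emod_nonneg _ (by exact_mod_cast hnpos.ne')
      have hrn : (i - j) % (n:ℤ) < (n:ℤ) := Int.emod_lt_of_pos _ (by exact_mod_cast hnpos)
      have hdecomp : (n:ℤ) * ((i - j) / (n:ℤ)) + (i - j) % (n:ℤ) = i - j :=
        Int.mul_ediv_add_emod _ _
      have hσr : σ ((i - j) % (n:ℤ)) = σ 0 := by
        have hp := hperiod ((i - j) % (n:ℤ)) ((i - j) / (n:ℤ))
        rw [show (i - j) % (n:ℤ) + (n:ℤ) * ((i - j) / (n:ℤ)) = i - j by linarith] at hp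
        rw [← hp]
        exact h0
      rcases eq_or_lt_of_le hr0 with h' | h'
      · exact Int.dvd_of_emod_eq_zero h'.symm
      · exfalso
        refine hmin ((i - j) % (n:ℤ)).toNat (by omega) ⟨by omega, ?_⟩
        rw [show ((((i - j) % (n:ℤ)).toNat : ℕ) : ℤ) = (i - j) % (n:ℤ) by omega]
        exact hσr
    · rintro ⟨m, hm⟩
      have := hperiod j m
      rw [show j + (n:ℤ) * m = i by linarith] at this
      exact this
  -- n ≥ 3
  have hn3 : 3 ≤ n := by
    have h1 : n ≠ 1 := by
      intro h
      have hper1 : σ 1 = σ 0 := by rw [← hnper, h]; norm_num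
      have hne := (hadjσ 0).ne
      rw [zero_add] at hne
      exact hne hper1.symm
    have h2 : n ≠ 2 := by
      intro h
      have : σ 2 = σ 0 := by rw [← hnper, h]; norm_num
      have hh := hneσ2 0
      rw [zero_add] at hh
      exact hh this.symm
    omega
  haveI : NeZero n := ⟨by omega⟩
  -- the cycle map
  set c : ZMod n → V := fun i => σ ((i.val : ℕ) : ℤ) with hcdef
  have hcast : ∀ m : ℤ, c ((m : ZMod n)) = σ m := by
    intro m
    show σ (((ZMod.val ((m : ℤ) : ZMod n) : ℕ)) : ℤ) = σ m
    rw [hmodkey]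
    refine (ZMod.intCast_zmod_eq_zero_iff_dvd _ n).mp ?_
    push_cast
    rw [ZMod.natCast_rightInverse ((m : ℤ) : ZMod n)]
    push_cast
    ring
  have hval : ∀ i : ZMod n, (((i.val : ℕ) : ℤ) : ZMod n) = i := by
    intro i
    push_cast
    exact ZMod.natCast_rightInverse i
  have hall : ∀ i : ZMod n, ∃ m : ℤ, i = ((m : ℤ) : ZMod n) := fun i =>
    ⟨((i.val : ℕ) : ℤ), (hval i).symm⟩
  have hΔc : ∀ i : ZMod n, ((c i, c (i+1), c (i+2), c (i+3)) : V×V×V×V) ∈ Δ := by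
    intro i
    obtain ⟨m, rfl⟩ := hall i
    have e1 : ((m : ℤ) : ZMod n) + 1 = ((m + 1 : ℤ) : ZMod n) := by push_cast; ring
    have e2 : ((m : ℤ) : ZMod n) + 2 = ((m + 2 : ℤ) : ZMod n) := by push_cast; ring
    have e3 : ((m : ℤ) : ZMod n) + 3 = ((m + 3 : ℤ) : ZMod n) := by push_cast; ring
    rw [e1, e2, e3, hcast, hcast, hcast, hcast]
    exact hΔσ m
  have hadjc : ∀ i : ZMod n, G.Adj (c i) (c (i+1)) := fun i => (harc3 _ (hΔc i)).1
  have hcinj : Function.Injective c := by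
    intro i j hij
    have hd : (n:ℤ) ∣ (((i.val : ℕ) : ℤ) - ((j.val : ℕ) : ℤ)) := (hmodkey _ _).mp hij
    have h1 := ZMod.val_lt i
    have h2 := ZMod.val_lt j
    have := Int.eq_zero_of_abs_lt_dvd hd (by rw [abs_lt]; constructor <;> push_cast <;> omega)
    have : i.val = j.val := by omega
    exact ZMod.val_injective n this
  set S₀ : Set (V × V) := cycleArcSet n c with hS₀def
  -- smul of a traced cycle
  have hsmulcyc : ∀ (y : X) (f : ZMod n → V),
      y • cycleArcSet n f = cycleArcSet n (fun i => y • f i) := by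
    intro y f
    ext p
    simp only [cycleArcSet, Set.mem_smul_set, Set.mem_setOf_eq]
    constructor
    · rintro ⟨q, ⟨i, hq | hq⟩, rfl⟩
      · exact ⟨i, Or.inl (by rw [hq]; rfl)⟩
      · exact ⟨i, Or.inr (by rw [hq]; rfl)⟩
    · rintro ⟨i, hp | hp⟩
      · exact ⟨(f i, f (i+1)), ⟨i, Or.inl rfl⟩, by rw [hp]; rfl⟩
      · exact ⟨(f (i+1), f i), ⟨i, Or.inr rfl⟩, by rw [hp]; rfl⟩
  -- rigidity
  have hrigid : ∀ f₁ f₂ : ZMod n → V,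
      (∀ i, ((f₁ i, f₁ (i+1), f₁ (i+2), f₁ (i+3)) : V×V×V×V) ∈ Δ) →
      (∀ i, ((f₂ i, f₂ (i+1), f₂ (i+2), f₂ (i+3)) : V×V×V×V) ∈ Δ) →
      ∀ j₁ j₂ : ZMod n, f₁ j₁ = f₂ j₂ → f₁ (j₁+1) = f₂ (j₂+1) → f₁ (j₁+2) = f₂ (j₂+2) →
      cycleArcSet n f₁ = cycleArcSet n f₂ := by
    intro f₁ f₂ hT1 hT2 j₁ j₂ h0 h1 h2
    have hstep : ∀ k : ℕ, f₁ (j₁ + (k:ZMod n)) = f₂ (j₂ + (k:ZMod n)) ∧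
        f₁ (j₁ + (k:ZMod n) + 1) = f₂ (j₂ + (k:ZMod n) + 1) ∧
        f₁ (j₁ + (k:ZMod n) + 2) = f₂ (j₂ + (k:ZMod n) + 2) := by
      intro k
      induction k with
      | zero =>
        simp only [Nat.cast_zero, add_zero]
        exact ⟨h0, h1, h2⟩
      | succ k ih =>
        obtain ⟨e0, e1, e2⟩ := ih
        have h4 := hT1 (j₁ + (k:ZMod n))
        have h4' := hT2 (j₂ + (k:ZMod n))
        have harc : IsArc2 G (f₂ (j₂ + (k:ZMod n)), f₂ (j₂ + (k:ZMod n) + 1),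
            f₂ (j₂ + (k:ZMod n) + 2)) := by
          obtain ⟨x1, x2, _, x4, _⟩ := harc3 _ h4'
          exact ⟨x1, x2, x4⟩
        have h4'' : ((f₂ (j₂ + (k:ZMod n)), f₂ (j₂ + (k:ZMod n) + 1), f₂ (j₂ + (k:ZMod n) + 2),
            f₁ (j₁ + (k:ZMod n) + 3)) : V×V×V×V) ∈ Δ := by
          rw [← e0, ← e1, ← e2]
          exact h4
        obtain ⟨d, _, hdu⟩ := hext _ _ _ harc
        have hkey : f₁ (j₁ + (k:ZMod n) + 3) = f₂ (j₂ + (k:ZMod n) + 3) :=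
          (hdu _ h4'').trans (hdu _ h4').symm
        refine ⟨?_, ?_, ?_⟩
        · rw [show j₁ + ((k+1 : ℕ) : ZMod n) = j₁ + (k : ZMod n) + 1 by push_cast; ring,
            show j₂ + ((k+1 : ℕ) : ZMod n) = j₂ + (k : ZMod n) + 1 by push_cast; ring]
          exact e1
        · rw [show j₁ + ((k+1 : ℕ) : ZMod n) + 1 = j₁ + (k : ZMod n) + 2 by push_cast; ring,
            show j₂ + ((k+1 : ℕ) : ZMod n) + 1 = j₂ + (k : ZMod n) + 2 by push_cast; ring]
          exact e2
        · rw [show j₁ + ((k+1 : ℕ) : ZMod n) + 2 = j₁ + (k : ZMod n) + 3 by push_cast; ring,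
            show j₂ + ((k+1 : ℕ) : ZMod n) + 2 = j₂ + (k : ZMod n) + 3 by push_cast; ring]
          exact hkey
    have hZ : ∀ i : ZMod n, f₁ (j₁ + i) = f₂ (j₂ + i) := by
      intro i
      have := (hstep i.val).1
      rwa [ZMod.natCast_rightInverse i] at this
    ext p
    simp only [cycleArcSet, Set.mem_setOf_eq]
    constructor
    · rintro ⟨i, h | h⟩
      · refine ⟨j₂ + (i - j₁), Or.inl ?_⟩
        rw [h]
        have a1 : f₁ i = f₂ (j₂ + (i - j₁)) := by
          have := hZ (i - j₁); rwa [show j₁ + (i - j₁) = i by ring] at this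
        have a2 : f₁ (i+1) = f₂ (j₂ + (i - j₁) + 1) := by
          have := hZ (i - j₁ + 1)
          rwa [show j₁ + (i - j₁ + 1) = i + 1 by ring,
            show j₂ + (i - j₁ + 1) = j₂ + (i - j₁) + 1 by ring] at this
        rw [a1, a2]
      · refine ⟨j₂ + (i - j₁), Or.inr ?_⟩
        rw [h]
        have a1 : f₁ i = f₂ (j₂ + (i - j₁)) := by
          have := hZ (i - j₁); rwa [show j₁ + (i - j₁) = i by ring] at this
        have a2 : f₁ (i+1) = f₂ (j₂ + (i - j₁) + 1) := by
          have := hZ (i - j₁ + 1)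
          rwa [show j₁ + (i - j₁ + 1) = i + 1 by ring,
            show j₂ + (i - j₁ + 1) = j₂ + (i - j₁) + 1 by ring] at this
        rw [a1, a2]
    · rintro ⟨i, h | h⟩
      · refine ⟨j₁ + (i - j₂), Or.inl ?_⟩
        rw [h]
        have a1 : f₂ i = f₁ (j₁ + (i - j₂)) := by
          have := hZ (i - j₂); rw [show j₂ + (i - j₂) = i by ring] at this; exact this.symm
        have a2 : f₂ (i+1) = f₁ (j₁ + (i - j₂) + 1) := by
          have := hZ (i - j₂ + 1)
          rw [show j₂ + (i - j₂ + 1) = i + 1 by ring,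
            show j₁ + (i - j₂ + 1) = j₁ + (i - j₂) + 1 by ring] at this
          exact this.symm
        rw [a1, a2]
      · refine ⟨j₁ + (i - j₂), Or.inr ?_⟩
        rw [h]
        have a1 : f₂ i = f₁ (j₁ + (i - j₂)) := by
          have := hZ (i - j₂); rw [show j₂ + (i - j₂) = i by ring] at this; exact this.symm
        have a2 : f₂ (i+1) = f₁ (j₁ + (i - j₂) + 1) := by
          have := hZ (i - j₂ + 1)
          rw [show j₂ + (i - j₂ + 1) = i + 1 by ring,
            show j₁ + (i - j₂ + 1) = j₁ + (i - j₂) + 1 by ring] at this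
          exact this.symm
        rw [a1, a2]
  -- the n-cycle walk, for girth bounds
  set f : ℕ → V := fun k => σ (k : ℤ) with hfdef
  have hadjf : ∀ i : ℕ, i < n → G.Adj (f i) (f (i+1)) := by
    intro i _
    have := hadjσ (i : ℤ)
    rw [show ((i : ℕ) : ℤ) + 1 = (((i+1 : ℕ)) : ℤ) by push_cast; ring] at this
    exact this
  have hfmod : ∀ a b : ℕ, f a = f b → (n:ℤ) ∣ ((a:ℤ) - (b:ℤ)) := fun a b h =>
    (hmodkey _ _).mp h
  set w₀ : G.Walk (f 0) (f n) := walkOfFn G f n hadjf with hw₀def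
  have hfn : f n = f 0 := hnper
  set w : G.Walk (f 0) (f 0) := w₀.copy rfl hfn with hwdef
  have hwlen : w.length = n := by
    rw [hwdef, SimpleGraph.Walk.length_copy, hw₀def, walkOfFn_length]
  have hwcyc : w.IsCycle := by
    rw [SimpleGraph.Walk.isCycle_def]
    refine ⟨?_, ?_, ?_⟩
    · rw [SimpleGraph.Walk.isTrail_def]
      have he : w.edges = (List.range n).map (fun i => s(f i, f (i+1))) := by
        rw [hwdef, SimpleGraph.Walk.edges_copy, hw₀def, walkOfFn_edges]
      rw [he]
      refine List.Nodup.map_on ?_ List.nodup_range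
      intro i hi j hj hij
      rw [List.mem_range] at hi hj
      rw [Sym2.eq_iff] at hij
      rcases hij with ⟨h1, _⟩ | ⟨h1, h2⟩
      · have hd := hfmod i j h1
        have := Int.eq_zero_of_abs_lt_dvd hd (by rw [abs_lt]; constructor <;> push_cast <;> omega)
        omega
      · exfalso
        have d1 := hfmod i (j+1) h1
        have d2 := hfmod (i+1) j h2
        have hdvd2 : (n:ℤ) ∣ 2 := by
          have := dvd_sub d2 d1
          rwa [show (((i+1:ℕ):ℤ) - (j:ℤ)) - ((i:ℤ) - ((j+1:ℕ):ℤ)) = 2 by push_cast; ring] at this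
        have := Int.le_of_dvd (by norm_num) hdvd2
        omega
    · intro hnil
      have := hwlen
      rw [hnil] at this
      simp at this
      omega
    · have hs : w.support = (List.range (n+1)).map f := by
        rw [hwdef, SimpleGraph.Walk.support_copy, hw₀def, walkOfFn_support]
      rw [hs, List.range_succ_eq_map, List.map_cons, List.tail_cons, List.map_map]
      refine List.Nodup.map_on ?_ List.nodup_range
      intro i hi j hj hij
      rw [List.mem_range] at hi hj
      have hd := hfmod (i+1) (j+1) hij
      have := Int.eq_zero_of_abs_lt_dvd hd (by rw [abs_lt]; constructor <;> push_cast <;> omega)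
      omega
  have hnotacyc : ¬ G.IsAcyclic := fun h => h w hwcyc
  have hgle : G.girth ≤ n := by
    have h1 : G.egirth ≤ ((n:ℕ) : ℕ∞) := by
      have h2 : G.egirth ≤ (w.length : ℕ∞) := by
        refine iInf_le_of_le (f 0) ?_
        refine iInf_le_of_le w ?_
        exact iInf_le _ hwcyc
      rwa [hwlen] at h2
    have := ENat.toNat_le_toNat h1 (by simp)
    simpa [SimpleGraph.girth] using this
  -- all members of the orbit are n-cycles
  have hcyclesets : ∀ S ∈ MulAction.orbit X S₀, IsNCycleSet G n S := by
    intro S hS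
    obtain ⟨y, rfl⟩ := MulAction.mem_orbit_iff.mp hS
    refine ⟨fun i => y • c i, ?_, ?_, ?_⟩
    · intro i j h
      exact hcinj (MulAction.injective y h)
    · intro i
      exact hA y _ _ (hadjc i)
    · exact hsmulcyc y c
  -- existence and uniqueness of the member through a 2-arc
  have huniq : ∀ t : V × V × V, IsArc2 G t →
      ∃! S : Set (V × V), S ∈ MulAction.orbit X S₀ ∧ (t.1, t.2.1) ∈ S ∧ (t.2.1, t.2.2) ∈ S := by
    rintro ⟨a, b, d⟩ ⟨hab, hbd, had⟩
    have hc2 : IsArc2 G (c 0, c (0+1), c (0+2)) := by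
      obtain ⟨x1, x2, _, x4, _⟩ := harc3 _ (hΔc 0)
      exact ⟨x1, x2, x4⟩
    obtain ⟨x, hx⟩ := h2T _ _ hc2 ⟨hab, hbd, had⟩
    simp only [hsmul3, Prod.mk.injEq] at hx
    obtain ⟨hx0, hx1, hx2⟩ := hx
    set fx : ZMod n → V := fun i => x • c i with hfxdef
    have hTx : ∀ i, ((fx i, fx (i+1), fx (i+2), fx (i+3)) : V×V×V×V) ∈ Δ := by
      intro i
      have := hinv x _ (hΔc i)
      rwa [hsmul4] at this
    have hSx : x • S₀ = cycleArcSet n fx := hsmulcyc x c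
    have hmem1 : ((a, b) : V × V) ∈ x • S₀ := by
      rw [hSx]
      exact ⟨0, Or.inl (by rw [← hx0, ← hx1])⟩
    have hmem2 : ((b, d) : V × V) ∈ x • S₀ := by
      rw [hSx]
      refine ⟨1, Or.inl ?_⟩
      rw [← hx1, ← hx2]
      rw [show (0:ZMod n) + 1 = 1 by ring, show (0:ZMod n) + 2 = 1 + 1 by ring]
    refine ⟨x • S₀, ⟨MulAction.mem_orbit_iff.mpr ⟨x, rfl⟩, hmem1, hmem2⟩, ?_⟩
    rintro S' ⟨hS'E, hm1, hm2⟩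
    obtain ⟨y, rfl⟩ := MulAction.mem_orbit_iff.mp hS'E
    set fy : ZMod n → V := fun i => y • c i with hfydef
    have hSy : y • S₀ = cycleArcSet n fy := hsmulcyc y c
    have hTy : ∀ i, ((fy i, fy (i+1), fy (i+2), fy (i+3)) : V×V×V×V) ∈ Δ := by
      intro i
      have := hinv y _ (hΔc i)
      rwa [hsmul4] at this
    have hinjy : Function.Injective fy := fun i j h => hcinj (MulAction.injective y h)
    rw [hSy] at hm1 hm2
    -- fx facts at 0
    have hfx0 : fx 0 = a := hx0
    have hfx1 : fx (0+1) = b := by rw [show (0:ZMod n)+1 = 1 by ring] at hx1 ⊢; exact hx1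
    have hfx2 : fx (0+2) = d := by rw [show (0:ZMod n)+2 = 2 by ring] at hx2 ⊢; exact hx2
    -- reversed trajectory machinery
    have hTz : ∀ i, ((fy (-i), fy (-(i+1)), fy (-(i+2)), fy (-(i+3))) : V×V×V×V) ∈ Δ := by
      intro i
      have h := hsp _ (hTy (-i-3))
      simp only [rev3] at h
      rw [show -i-3+3 = -i by ring, show -i-3+2 = -(i+1) by ring,
        show -i-3+1 = -(i+2) by ring, show -i-3 = -(i+3) by ring] at h
      exact h
    set fz : ZMod n → V := fun i => fy (-i) with hfzdef
    have hTz' : ∀ i, ((fz i, fz (i+1), fz (i+2), fz (i+3)) : V×V×V×V) ∈ Δ := fun i => hTz i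
    have hcycz : cycleArcSet n fz = cycleArcSet n fy := by
      ext p
      simp only [cycleArcSet, Set.mem_setOf_eq, hfzdef]
      constructor
      · rintro ⟨i, h | h⟩
        · exact ⟨-(i+1), Or.inr (by rw [h, show (-(i+1) : ZMod n) + 1 = -i by ring])⟩
        · exact ⟨-(i+1), Or.inl (by rw [h, show (-(i+1) : ZMod n) + 1 = -i by ring])⟩
      · rintro ⟨i, h | h⟩
        · exact ⟨-(i+1), Or.inr (by
            rw [h, show (-(-(i+1)+1) : ZMod n) = i by ring,
              show (-(-(i+1)) : ZMod n) = i+1 by ring])⟩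
        · exact ⟨-(i+1), Or.inl (by
            rw [h, show (-(-(i+1)) : ZMod n) = i+1 by ring,
              show (-(-(i+1)+1) : ZMod n) = i by ring])⟩
      -- the four cases
    simp only [cycleArcSet, Set.mem_setOf_eq, Prod.mk.injEq] at hm1 hm2
    obtain ⟨i, ⟨ha, hb⟩ | ⟨ha, hb⟩⟩ := hm1 <;> obtain ⟨i', ⟨hb', hd⟩ | ⟨hb', hd⟩⟩ := hm2
    · -- a = fy i, b = fy (i+1); b = fy i', d = fy (i'+1)
      have hii : i' = i + 1 := hinjy (hb'.symm.trans hb)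
      rw [hii] at hd
      rw [hSy, hSx]
      refine hrigid fy fx hTy hTx i 0 ?_ ?_ ?_
      · rw [← ha, hfx0]
      · rw [← hb, hfx1]
      · rw [hfx2, hd]
        congr 1
        ring
    · -- a = fy i, b = fy (i+1); b = fy (i'+1), d = fy i'
      exfalso
      have hii : i' + 1 = i + 1 := hinjy (hb'.symm.trans hb)
      have hii' : i' = i := by
        have := add_right_cancel hii
        exact this
      rw [hii'] at hd
      exact had (ha.trans hd.symm)
    · -- a = fy (i+1), b = fy i; b = fy i', d = fy (i'+1)
      exfalso
      have hii' : i' = i := hinjy (hb'.symm.trans hb)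
      rw [hii'] at hd
      exact had (ha.trans hd.symm)
    · -- reversed case: a = fy (i+1), b = fy i, b = fy (i'+1), d = fy i'
      have hii : i' + 1 = i := hinjy (hb'.symm.trans hb)
      have hzz : cycleArcSet n fz = cycleArcSet n fx := by
        refine hrigid fz fx hTz' hTx (-(i+1)) 0 ?_ ?_ ?_
        · rw [hfx0, ha]
          simp only [hfzdef]
          congr 1
          ring
        · rw [hfx1, hb]
          simp only [hfzdef]
          congr 1
          ring
        · rw [hfx2, hd]
          simp only [hfzdef]
          congr 1
          rw [← hii]
          ring
      rw [hSy, hSx, ← hcycz, hzz]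
  -- assemble
  refine ⟨n, MulAction.orbit X S₀, hgle, hcyclesets, ⟨S₀, MulAction.mem_orbit_self S₀, rfl⟩,
    huniq, ?_⟩
  by_cases htri : ∃ p q r : V, G.Adj p q ∧ G.Adj q r ∧ G.Adj p r
  · -- complete graph case
    obtain ⟨p₀, q₀, r₀, hpq, hqr, hpr⟩ := htri
    have hclose : ∀ u b w' : V, G.Adj u b → G.Adj b w' → u ≠ w' → G.Adj u w' := by
      intro u b w' h1 h2 h3
      obtain ⟨z, hz⟩ := h2T (p₀,q₀,r₀) (u,b,w') ⟨hpq, hqr, hpr.ne⟩ ⟨h1,h2,h3⟩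
      simp only [hsmul3, Prod.mk.injEq] at hz
      obtain ⟨z1, _, z3⟩ := hz
      have := hA z p₀ r₀ hpr
      rwa [z1, z3] at this
    have hcomp : ∀ u w' : V, u ≠ w' → G.Adj u w' := by
      intro u w' hne
      obtain ⟨pw⟩ := hconn.preconnected u w'
      have main : ∀ (x' y' : V) (q : G.Walk x' y'), x' = y' ∨ G.Adj x' y' := by
        intro x' y' q
        induction q with
        | nil => exact Or.inl rfl
        | @cons x'' b y'' hadj q ih =>
          rcases ih with rfl | hby
          · exact Or.inr hadj
          · by_cases hxy : x'' = y''
            · exact Or.inl hxy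
            · exact Or.inr (hclose _ _ _ hadj hby hxy)
      rcases main u w' pw with rfl | h
      · exact absurd rfl hne
      · exact h
    have hcard : Fintype.card V = v + 1 := by
      obtain ⟨u⟩ := hconn.nonempty
      have hns : G.neighborSet u = {u}ᶜ := by
        ext w'
        simp only [SimpleGraph.mem_neighborSet, Set.mem_compl_iff, Set.mem_singleton_iff]
        constructor
        · intro h
          exact h.ne'
        · intro h
          exact hcomp u w' (fun e => h e.symm)
      have h1 : ({u} : Set V).ncard + ({u}ᶜ : Set V).ncard = Nat.card V :=
        Set.ncard_add_ncard_compl _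
      rw [Set.ncard_singleton] at h1
      have h2 : ({u}ᶜ : Set V).ncard = v := by rw [← hns]; exact hreg u
      rw [Nat.card_eq_fintype_card] at h1
      omega
    refine Or.inl ⟨⟨Fintype.equivFinOfCardEq hcard, ?_⟩⟩
    intro a b
    simp only [SimpleGraph.top_adj, ne_eq, EmbeddingLike.apply_eq_iff_eq]
    constructor
    · intro h
      exact hcomp a b h
    · intro h
      exact h.ne
  · -- girth at least 4
    have h3le : 3 ≤ G.girth := SimpleGraph.three_le_girth hnotacyc
    have hne3 : G.girth ≠ 3 := by
      intro h3'
      obtain ⟨a, wc, hwc, hlen⟩ := SimpleGraph.exists_girth_eq_length.mpr hnotacyc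
      rw [h3'] at hlen
      cases wc with
      | nil => simp at hlen
      | cons h1 p =>
        cases p with
        | nil => simp at hlen
        | cons h2 q =>
          cases q with
          | nil => simp at hlen
          | cons h3'' r =>
            cases r with
            | cons h4' s =>
              simp only [SimpleGraph.Walk.length_cons] at hlen
              omega
            | nil => exact htri ⟨_, _, _, h1, h2, h3''.symm⟩
    have h4le : 4 ≤ G.girth := by omega
    exact Or.inr ⟨h4le, hconn, h4le, hcyclesets, huniq⟩
end

section
/- Every connected (X,2)-arc-regular graph of even valency v ≥ 4 and girth at least 4 is a near n-gonal graph for some integer n ≥ 4. -/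
open Pointwise

private lemma evenCard_of_no_fixed {α : Type*} [DecidableEq α] (s : Finset α) (f : α → α) :
    (∀ a ∈ s, f a ∈ s) → (∀ a ∈ s, f (f a) = a) → (∀ a ∈ s, f a ≠ a) → Even s.card := by
  induction s using Finset.strongInduction with
  | _ s ih =>
    intro hmaps hinv hne
    rcases s.eq_empty_or_nonempty with rfl | ⟨a, ha⟩
    · simp
    have hfa : f a ∈ s := hmaps a ha
    have hfa' : f a ≠ a := hne a ha
    have hfamem : f a ∈ s.erase a := Finset.mem_erase.mpr ⟨hfa', hfa⟩
    have hmem : ∀ b, b ∈ (s.erase a).erase (f a) ↔ b ≠ f a ∧ b ≠ a ∧ b ∈ s := by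
      intro b
      simp only [Finset.mem_erase]
    have hss : (s.erase a).erase (f a) ⊂ s :=
      lt_of_le_of_lt (Finset.erase_subset _ _) (Finset.erase_ssubset ha)
    have hcard : ((s.erase a).erase (f a)).card = s.card - 1 - 1 := by
      rw [Finset.card_erase_of_mem hfamem, Finset.card_erase_of_mem ha]
    have h2 : 2 ≤ s.card := Finset.one_lt_card.mpr ⟨a, ha, f a, hfa, fun e => hfa' e.symm⟩
    have heven : Even ((s.erase a).erase (f a)).card := by
      refine ih _ hss ?_ ?_ ?_
      · intro b hb
        obtain ⟨hbfa, hba, hbs⟩ := (hmem b).mp hb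
        refine (hmem (f b)).mpr ⟨?_, ?_, hmaps b hbs⟩
        · intro e
          exact hba (by rw [← hinv b hbs, e, hinv a ha])
        · intro e
          exact hbfa (by rw [← hinv b hbs, e])
      · intro b hb
        exact hinv b ((hmem b).mp hb).2.2
      · intro b hb
        exact hne b ((hmem b).mp hb).2.2
    obtain ⟨k, hk⟩ := heven
    exact ⟨k + 1, by omega⟩

private lemma existsFixed_of_involutive {α : Type*} [DecidableEq α] {s : Finset α} {f : α → α}
    (hmaps : ∀ a ∈ s, f a ∈ s) (hinv : ∀ a ∈ s, f (f a) = a) (hodd : Odd s.card) :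
    ∃ a ∈ s, f a = a := by
  by_contra h
  push_neg at h
  exact (Nat.not_even_iff_odd.mpr hodd) (evenCard_of_no_fixed s f hmaps hinv h)

private lemma arc2reg_rigid {V X : Type*} [Group X] [MulAction X V] {G : SimpleGraph V}
    (h2ar : Arc2Reg X G) {p q r : V} (hpq : G.Adj p q) (hqr : G.Adj q r) (hpr : p ≠ r)
    {g h : X} (h1 : g • p = h • p) (h2 : g • q = h • q) (h3 : g • r = h • r) : g = h := by
  have hadj := h2ar.1.1
  have harc : IsArc2 G (p, q, r) := ⟨hpq, hqr, hpr⟩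
  have harc' : IsArc2 G (h • p, h • q, h • r) :=
    ⟨hadj h p q hpq, hadj h q r hqr, fun e => hpr (MulAction.injective h e)⟩
  obtain ⟨u, -, huniq⟩ := h2ar.2 (p, q, r) (h • p, h • q, h • r) harc harc'
  have e1 : g • ((p, q, r) : V × V × V) = (h • p, h • q, h • r) := by
    show (g • p, g • q, g • r) = _
    rw [h1, h2, h3]
  exact (huniq g e1).trans (huniq h rfl).symm

/-- Every connected `(X,2)`-arc-regular graph of even valency `v ≥ 4` and
girth at least `4` is a near `n`-gonal graph for some `n ≥ 4`. -/
theorem nearNGonal_of_arc2Regular {V X : Type*} [Fintype V] [Group X] [MulAction X V]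
    (G : SimpleGraph V) (v : ℕ) (hv : 4 ≤ v) (hveven : Even v) (hreg : Regular G v)
    (hconn : G.Connected) (h2ar : Arc2Reg X G) (hgirth : 4 ≤ G.girth) :
    ∃ (n : ℕ) (E : Set (Set (V × V))), 4 ≤ n ∧ NearNGonal G n E := by
  classical
  obtain ⟨⟨hadj, hvt, hat⟩, hreg2⟩ := h2ar
  have h2ar' : Arc2Reg X G := ⟨⟨hadj, hvt, hat⟩, hreg2⟩
  -- girth at least 4 as extended girth
  have hegirth : (4 : ℕ∞) ≤ G.egirth := by
    by_cases hac : G.IsAcyclic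
    · rw [hac.egirth_eq_top]; exact le_top
    · obtain ⟨a, w, hw, he⟩ := SimpleGraph.exists_egirth_eq_length.mpr hac
      have hgl : G.girth = w.length := by rw [SimpleGraph.girth, he, ENat.toNat_coe]
      rw [he]
      exact_mod_cast hgl ▸ hgirth
  -- triangle-freeness
  have htri : ∀ a b c : V, G.Adj a b → G.Adj b c → G.Adj c a → False := by
    intro a b c hab hbc hca
    have hpath : (SimpleGraph.Walk.cons hbc
        (SimpleGraph.Walk.cons hca SimpleGraph.Walk.nil)).IsPath := by
      simp [SimpleGraph.Walk.isPath_def, hbc.ne, hca.ne, hab.ne']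
    have hcyc : (SimpleGraph.Walk.cons hab (SimpleGraph.Walk.cons hbc
        (SimpleGraph.Walk.cons hca SimpleGraph.Walk.nil))).IsCycle := by
      rw [SimpleGraph.Walk.cons_isCycle_iff]
      refine ⟨hpath, ?_⟩
      simp only [SimpleGraph.Walk.edges_cons, SimpleGraph.Walk.edges_nil, List.mem_cons,
        List.not_mem_nil, or_false, Sym2.eq_iff]
      rintro ((⟨h1, -⟩ | ⟨h1, -⟩) | (⟨h1, -⟩ | ⟨-, h2⟩))
      · exact hab.ne h1
      · exact hca.ne' h1
      · exact hca.ne' h1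
      · exact hbc.ne h2
    have h4 := SimpleGraph.le_egirth.mp hegirth a _ hcyc
    simp only [SimpleGraph.Walk.length_cons, SimpleGraph.Walk.length_nil] at h4
    norm_num at h4
  -- neighbours exist
  have hnb : ∀ u : V, ∃ w, G.Adj u w := by
    intro u
    have h0 : (G.neighborSet u).ncard = v := hreg u
    have hne : (G.neighborSet u).Nonempty := by
      rw [← Set.ncard_pos (Set.toFinite _), h0]; omega
    obtain ⟨w, hw⟩ := hne
    exact ⟨w, hw⟩
  obtain ⟨p⟩ := hconn.nonempty
  obtain ⟨q, hpq⟩ := hnb p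
  have hcardq : 1 < (G.neighborSet q).ncard := by rw [hreg q]; omega
  obtain ⟨r, hr, hrp⟩ := Set.exists_ne_of_one_lt_ncard hcardq p
  have hqr : G.Adj q r := hr
  have hpr : p ≠ r := fun e => hrp e.symm
  have harc_pqr : IsArc2 G (p, q, r) := ⟨hpq, hqr, hpr⟩
  -- the set of candidate fourth vertices
  set D : Set V := G.neighborSet r \ {q} with hD
  have hqmem : q ∈ G.neighborSet r := hqr.symm
  have hDmem : ∀ d, d ∈ D ↔ G.Adj r d ∧ d ≠ q := by
    intro d
    simp [hD, Set.mem_diff]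
  have hDfin : D.Finite := Set.toFinite _
  have hFcard : hDfin.toFinset.card = v - 1 := by
    rw [← Set.ncard_eq_toFinset_card D hDfin, hD,
      Set.ncard_diff_singleton_of_mem hqmem, hreg r]
  -- the pairing on fourth vertices via reversal
  have hgex : ∀ d, d ∈ D → ∃ g : X, g • d = p ∧ g • r = q ∧ g • q = r := by
    intro d hd
    obtain ⟨hrd, hdq⟩ := (hDmem d).mp hd
    have harc1 : IsArc2 G (d, r, q) := ⟨hrd.symm, hqr.symm, hdq⟩
    obtain ⟨g, hg, -⟩ := hreg2 (d, r, q) (p, q, r) harc1 harc_pqr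
    exact ⟨g, congrArg Prod.fst hg, congrArg (fun z => z.2.1) hg,
      congrArg (fun z => z.2.2) hg⟩
  choose! gg hgg1 hgg2 hgg3 using hgex
  have hmapsF : ∀ e ∈ hDfin.toFinset, gg e • p ∈ hDfin.toFinset := by
    intro e he
    rw [Set.Finite.mem_toFinset] at he ⊢
    refine (hDmem _).mpr ⟨?_, ?_⟩
    · have h := hadj (gg e) q p hpq.symm
      rwa [hgg3 e he] at h
    · intro hcontra
      exact hpr (MulAction.injective (gg e) (hcontra.trans (hgg2 e he).symm))
  have hinvF : ∀ e ∈ hDfin.toFinset, gg (gg e • p) • p = e := by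
    intro e he
    have he' : e ∈ D := (Set.Finite.mem_toFinset hDfin).mp he
    have hd' : gg e • p ∈ D := (Set.Finite.mem_toFinset hDfin).mp (hmapsF e he)
    obtain ⟨hrfd, hfdq⟩ := (hDmem _).mp hd'
    have hkey : gg (gg e • p) = (gg e)⁻¹ := by
      refine arc2reg_rigid h2ar' hrfd.symm hqr.symm hfdq ?_ ?_ ?_
      · rw [hgg1 _ hd', inv_smul_smul]
      · rw [hgg2 _ hd', eq_inv_smul_iff]
        exact hgg3 e he'
      · rw [hgg3 _ hd', eq_inv_smul_iff]
        exact hgg2 e he'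
    rw [hkey, inv_smul_eq_iff]
    exact (hgg1 e he').symm
  have hodd : Odd hDfin.toFinset.card := by
    rw [hFcard]
    exact Nat.Even.sub_odd (by omega) hveven odd_one
  obtain ⟨d, hdF, hfixd⟩ := existsFixed_of_involutive hmapsF hinvF hodd
  rw [Set.Finite.mem_toFinset] at hdF
  obtain ⟨hrd, hdq⟩ := (hDmem d).mp hdF
  set y : X := gg d with hy
  have hy_p : y • p = d := hfixd
  have hy_d : y • d = p := hgg1 d hdF
  have hy_r : y • r = q := hgg2 d hdF
  have hy_q : y • q = r := hgg3 d hdF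
  -- the shunting element x
  have harc_qrd : IsArc2 G (q, r, d) := ⟨hqr, hrd, fun e => hdq e.symm⟩
  obtain ⟨x, hxeq, -⟩ := hreg2 (p, q, r) (q, r, d) harc_pqr harc_qrd
  have hx_p : x • p = q := congrArg Prod.fst hxeq
  have hx_q : x • q = r := congrArg (fun z => z.2.1) hxeq
  have hx_r : x • r = d := congrArg (fun z => z.2.2) hxeq
  -- dihedral relations
  have hyy : y * y = 1 := by
    refine arc2reg_rigid h2ar' hpq hqr hpr ?_ ?_ ?_
    · rw [mul_smul, hy_p, hy_d, one_smul]
    · rw [mul_smul, hy_q, hy_r, one_smul]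
    · rw [mul_smul, hy_r, hy_q, one_smul]
  have hyxy : y * x * y = x⁻¹ := by
    refine arc2reg_rigid h2ar' hqr hrd (fun e => hdq e.symm) ?_ ?_ ?_
    · rw [mul_smul, mul_smul, hy_q, hx_r, hy_d, eq_inv_smul_iff]
      exact hx_p
    · rw [mul_smul, mul_smul, hy_r, hx_q, hy_r, eq_inv_smul_iff]
      exact hx_q
    · rw [mul_smul, mul_smul, hy_d, hx_p, hy_q, eq_inv_smul_iff]
      exact hx_r
  set z : X := y * x with hz
  have hz_p : z • p = r := by rw [hz, mul_smul, hx_p, hy_q]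
  have hz_q : z • q = q := by rw [hz, mul_smul, hx_q, hy_r]
  have hz_r : z • r = p := by rw [hz, mul_smul, hx_r, hy_d]
  have hzx : z * x = x⁻¹ * z := by
    have h1 : x⁻¹ * z = y * x * (y * y) * x := by
      rw [← hyxy, hz]; group
    rw [hyy, mul_one] at h1
    rw [h1, hz]
  have hzz : z * z = 1 := by
    have h1 : z * z = (y * x * y) * x := by rw [hz]; group
    rw [h1, hyxy, inv_mul_cancel]
  have hzpow : ∀ k : ℕ, z * x ^ k = x⁻¹ ^ k * z := by
    intro k
    induction k with
    | zero => simp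
    | succ k ih =>
      rw [pow_succ, ← mul_assoc, ih, mul_assoc, hzx, ← mul_assoc, ← pow_succ]
  -- the period n
  have hfixm : ∃ m : ℕ, 0 < m ∧ x ^ m • p = p := by
    obtain ⟨i, j, hij, he⟩ := Fintype.exists_ne_map_eq_of_card_lt
      (fun m : Fin (Fintype.card V + 1) => x ^ (m : ℕ) • p) (by simp)
    rcases hij.lt_or_gt with hlt | hlt
    · refine ⟨(j : ℕ) - (i : ℕ), by omega, ?_⟩
      have e : x ^ (i : ℕ) • (x ^ ((j : ℕ) - (i : ℕ)) • p) = x ^ (i : ℕ) • p := by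
        rw [smul_smul, ← pow_add, Nat.add_sub_cancel' (le_of_lt hlt)]
        exact he.symm
      exact MulAction.injective _ e
    · refine ⟨(i : ℕ) - (j : ℕ), by omega, ?_⟩
      have e : x ^ (j : ℕ) • (x ^ ((i : ℕ) - (j : ℕ)) • p) = x ^ (j : ℕ) • p := by
        rw [smul_smul, ← pow_add, Nat.add_sub_cancel' (le_of_lt hlt)]
        exact he
      exact MulAction.injective _ e
  obtain ⟨m₀, hm₀pos, hm₀⟩ := hfixm
  set n : ℕ := MulAction.period x p with hn
  have hnpos : 0 < n := MulAction.period_pos_of_fixed hm₀pos hm₀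
  haveI : NeZero n := ⟨hnpos.ne'⟩
  have hdvd : ∀ m : ℕ, x ^ m • p = p ↔ n ∣ m := fun m =>
    MulAction.pow_smul_eq_iff_period_dvd
  have hmodsmul : ∀ m : ℕ, x ^ m • p = x ^ (m % n) • p := fun m =>
    (MulAction.pow_mod_period_smul m).symm
  -- the base cycle
  set γ : ZMod n → V := fun i => x ^ i.val • p with hγdef
  have hγval : ∀ i : ZMod n, γ i = x ^ i.val • p := fun i => by rw [hγdef]
  have hγnat : ∀ m : ℕ, γ (m : ZMod n) = x ^ m • p := by
    intro m
    rw [hγval, ZMod.val_natCast]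
    exact (hmodsmul m).symm
  have hstep : ∀ (i : ZMod n) (k : ℕ), x ^ k • γ i = γ (i + (k : ZMod n)) := by
    intro i k
    rw [show i + (k : ZMod n) = ((i.val + k : ℕ) : ZMod n) from by
      rw [Nat.cast_add, ZMod.natCast_rightInverse i], hγnat, hγval, smul_smul, ← pow_add,
      Nat.add_comm]
  have hsh : ∀ (j i : ZMod n), x ^ i.val • γ j = γ (j + i) := by
    intro j i
    rw [hstep j i.val, ZMod.natCast_rightInverse i]
  have hγ0 : γ 0 = p := by rw [hγval, ZMod.val_zero, pow_zero, one_smul]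
  have hγstep1 : ∀ i : ZMod n, γ (i + 1) = x • γ i := by
    intro i
    have h := hstep i 1
    rw [pow_one, Nat.cast_one] at h
    exact h.symm
  have hγ1 : γ 1 = q := by
    rw [show (1 : ZMod n) = 0 + 1 from (zero_add 1).symm, hγstep1, hγ0, hx_p]
  have hγ2 : γ 2 = r := by
    rw [show (2 : ZMod n) = 1 + 1 from one_add_one_eq_two.symm, hγstep1, hγ1, hx_q]
  have hγinj : Function.Injective γ := by
    have key : ∀ i j : ZMod n, j.val ≤ i.val → γ i = γ j → i = j := by
      intro i j hle hij
      rw [hγval, hγval] at hij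
      have e : x ^ j.val • (x ^ (i.val - j.val) • p) = x ^ j.val • p := by
        rw [smul_smul, ← pow_add, Nat.add_sub_cancel' hle]
        exact hij
      have e2 : x ^ (i.val - j.val) • p = p := MulAction.injective _ e
      have hdv : n ∣ i.val - j.val := (hdvd _).mp e2
      have h0 : i.val - j.val = 0 :=
        Nat.eq_zero_of_dvd_of_lt hdv (lt_of_le_of_lt (Nat.sub_le _ _) (ZMod.val_lt i)) |>.symm ▸ rfl
      have hval : i.val = j.val := by omega
      rw [← ZMod.natCast_rightInverse i, ← ZMod.natCast_rightInverse j, hval]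
    intro i j hij
    rcases le_total j.val i.val with h | h
    · exact key i j h hij
    · exact (key j i h hij.symm).symm
  -- n is at least 4
  have hx2p : x ^ 2 • p = r := by rw [pow_two, mul_smul, hx_p, hx_q]
  have hx3p : x ^ 3 • p = d := by rw [pow_succ, mul_smul, hx_p, pow_two, mul_smul, hx_q, hx_r]
  have hfixn : x ^ n • p = p := (hdvd n).mpr dvd_rfl
  have hn4 : 4 ≤ n := by
    by_contra hlt
    push_neg at hlt
    have h123 : n = 1 ∨ n = 2 ∨ n = 3 := by omega
    rcases h123 with h1 | h2 | h3
    · rw [h1, pow_one, hx_p] at hfixn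
      exact hpq.ne' hfixn
    · rw [h2, hx2p] at hfixn
      exact hpr hfixn.symm
    · rw [h3, hx3p] at hfixn
      exact htri p q r hpq hqr (hfixn ▸ hrd)
  -- the base cycle's arc set and its symmetries
  set S₀ : Set (V × V) := cycleArcSet n γ with hS₀
  have hpq₀ : (p, q) ∈ S₀ := by
    rw [hS₀]
    exact ⟨0, Or.inl (by rw [hγ0, zero_add, hγ1])⟩
  have hqr₀ : (q, r) ∈ S₀ := by
    rw [hS₀]
    exact ⟨1, Or.inl (by rw [hγ1, one_add_one_eq_two, hγ2])⟩
  have hsmularc : ∀ (g : X) (T : ZMod n → V),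
      g • cycleArcSet n T = cycleArcSet n (fun i => g • T i) := by
    intro g T
    ext pr
    rw [Set.mem_smul_set]
    simp only [cycleArcSet, Set.mem_setOf_eq]
    constructor
    · rintro ⟨q', ⟨i, hq | hq⟩, he⟩
      · exact ⟨i, Or.inl (by rw [← he, hq]; rfl)⟩
      · exact ⟨i, Or.inr (by rw [← he, hq]; rfl)⟩
    · rintro ⟨i, hpr' | hpr'⟩
      · exact ⟨(T i, T (i + 1)), ⟨i, Or.inl rfl⟩, by rw [hpr']; rfl⟩
      · exact ⟨(T (i + 1), T i), ⟨i, Or.inr rfl⟩, by rw [hpr']; rfl⟩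
  have hxS : x • S₀ = S₀ := by
    rw [hS₀, hsmularc]
    ext pr
    simp only [cycleArcSet, Set.mem_setOf_eq]
    have hfun : ∀ i : ZMod n, x • γ i = γ (i + 1) := fun i => (hγstep1 i).symm
    constructor
    · rintro ⟨i, h | h⟩
      · exact ⟨i + 1, Or.inl (by rw [h, hfun, hfun])⟩
      · exact ⟨i + 1, Or.inr (by rw [h, hfun, hfun])⟩
    · rintro ⟨i, h | h⟩
      · refine ⟨i - 1, Or.inl ?_⟩
        rw [h, hfun, hfun, sub_add_cancel]
      · refine ⟨i - 1, Or.inr ?_⟩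
        rw [h, hfun, hfun, sub_add_cancel]
  have hxSpow : ∀ k : ℕ, x ^ k • S₀ = S₀ := by
    intro k
    induction k with
    | zero => simp
    | succ k ih => rw [pow_succ, mul_smul, hxS, ih]
  have hzγ : ∀ i : ZMod n, z • γ i = γ (2 - i) := by
    intro i
    have h1 : z • γ i = x⁻¹ ^ i.val • (z • p) := by
      rw [hγval, smul_smul, hzpow, mul_smul]
    rw [h1, hz_p, ← hγ2]
    have h2 : x ^ i.val • γ (2 - i) = γ 2 := by
      rw [hsh, sub_add_cancel]
    rw [← h2, inv_pow, inv_smul_smul]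
  have hzS : z • S₀ = S₀ := by
    rw [hS₀, hsmularc]
    ext pr
    simp only [cycleArcSet, Set.mem_setOf_eq, hzγ]
    constructor
    · rintro ⟨i, h | h⟩
      · refine ⟨1 - i, Or.inr ?_⟩
        rw [h]
        congr 1 <;> congr 1 <;> ring
      · refine ⟨1 - i, Or.inl ?_⟩
        rw [h]
        congr 1 <;> congr 1 <;> ring
    · rintro ⟨i, h | h⟩
      · refine ⟨1 - i, Or.inr ?_⟩
        rw [h]
        congr 1 <;> congr 1 <;> ring
      · refine ⟨1 - i, Or.inl ?_⟩
        rw [h]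
        congr 1 <;> congr 1 <;> ring
  -- the key uniqueness lemma
  have hkey : ∀ h : X, (p, q) ∈ h • S₀ → (q, r) ∈ h • S₀ → h • S₀ = S₀ := by
    intro h hpq' hqr'
    rw [Set.mem_smul_set_iff_inv_smul_mem] at hpq' hqr'
    have hS₀inv : h⁻¹ • S₀ = S₀ → h • S₀ = S₀ := by
      intro e
      have e2 := congrArg (fun T : Set (V × V) => h • T) e
      simpa using e2.symm
    rw [hS₀] at hpq' hqr'
    obtain ⟨i, hi⟩ := hpq'
    obtain ⟨j, hj⟩ := hqr'
    rcases hi with hi | hi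
    · have hip : h⁻¹ • p = γ i := congrArg Prod.fst hi
      have hiq : h⁻¹ • q = γ (i + 1) := congrArg Prod.snd hi
      rcases hj with hj | hj
      · have hjq : h⁻¹ • q = γ j := congrArg Prod.fst hj
        have hjr : h⁻¹ • r = γ (j + 1) := congrArg Prod.snd hj
        have hji : j = i + 1 := hγinj (hjq.symm.trans hiq)
        have heq : h⁻¹ = x ^ i.val := by
          refine arc2reg_rigid h2ar' hpq hqr hpr ?_ ?_ ?_
          · rw [hip, ← hγ0, hsh, zero_add]
          · rw [hiq, ← hγ1, hsh]
            congr 1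
            ring
          · rw [hjr, hji, ← hγ2, hsh]
            congr 1
            ring
        apply hS₀inv
        rw [heq]
        exact hxSpow i.val
      · have hjq : h⁻¹ • q = γ (j + 1) := congrArg Prod.fst hj
        have hjr : h⁻¹ • r = γ j := congrArg Prod.snd hj
        have hji : i + 1 = j + 1 := hγinj (hiq.symm.trans hjq)
        have hij2 : i = j := by
          have := add_right_cancel hji
          exact this
        exact absurd (MulAction.injective h⁻¹ (hip.trans (hij2 ▸ hjr).symm)) hpr
    · have hip : h⁻¹ • p = γ (i + 1) := congrArg Prod.fst hi
      have hiq : h⁻¹ • q = γ i := congrArg Prod.snd hi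
      rcases hj with hj | hj
      · have hjq : h⁻¹ • q = γ j := congrArg Prod.fst hj
        have hjr : h⁻¹ • r = γ (j + 1) := congrArg Prod.snd hj
        have hij2 : i = j := hγinj (hiq.symm.trans hjq)
        exact absurd (MulAction.injective h⁻¹ (hip.trans (hij2 ▸ hjr).symm)) hpr
      · have hjq : h⁻¹ • q = γ (j + 1) := congrArg Prod.fst hj
        have hjr : h⁻¹ • r = γ j := congrArg Prod.snd hj
        have hij2 : i = j + 1 := hγinj (hiq.symm.trans hjq)
        have heq : h⁻¹ = x ^ j.val * z := by
          refine arc2reg_rigid h2ar' hpq hqr hpr ?_ ?_ ?_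
          · rw [hip, hij2, mul_smul, hz_p, ← hγ2, hsh]
            congr 1
            ring
          · rw [hiq, hij2, mul_smul, hz_q, ← hγ1, hsh]
            congr 1
            ring
          · rw [hjr, mul_smul, hz_r, ← hγ0, hsh, zero_add]
        apply hS₀inv
        rw [heq, mul_smul, hzS]
        exact hxSpow j.val
  -- conclusion
  refine ⟨n, MulAction.orbit X S₀, hn4, hconn, hgirth, ?_, ?_⟩
  · intro S hS
    obtain ⟨g, hg⟩ := MulAction.mem_orbit_iff.mp hS
    refine ⟨fun i => g • γ i, fun i j e => hγinj (MulAction.injective g e), fun i => ?_, ?_⟩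
    · refine hadj g _ _ ?_
      rw [hγstep1]
      have hcomm : x • γ i = x ^ i.val • q := by
        rw [hγval, smul_smul, ← pow_succ', pow_succ, mul_smul, hx_p]
      rw [hcomm, hγval]
      exact hadj _ p q hpq
    · rw [← hg, hS₀, hsmularc]
  · intro t ht
    obtain ⟨t₁, t₂, t₃⟩ := t
    obtain ⟨g, hg, -⟩ := hreg2 (p, q, r) (t₁, t₂, t₃) harc_pqr ht
    have hg1 : g • p = t₁ := congrArg Prod.fst hg
    have hg2 : g • q = t₂ := congrArg (fun z => z.2.1) hg
    have hg3 : g • r = t₃ := congrArg (fun z => z.2.2) hg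
    have hgpq : g • ((p, q) : V × V) = (t₁, t₂) := by
      show (g • p, g • q) = _
      rw [hg1, hg2]
    have hgqr : g • ((q, r) : V × V) = (t₂, t₃) := by
      show (g • q, g • r) = _
      rw [hg2, hg3]
    refine ⟨g • S₀, ⟨MulAction.mem_orbit _ g, ?_, ?_⟩, ?_⟩
    · have hmem := Set.smul_mem_smul_set (a := g) hpq₀
      rwa [hgpq] at hmem
    · have hmem := Set.smul_mem_smul_set (a := g) hqr₀
      rwa [hgqr] at hmem
    · rintro S' ⟨hS'E, h1', h2'⟩
      obtain ⟨k, hk⟩ := MulAction.mem_orbit_iff.mp hS'E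
      have hpq'' : (p, q) ∈ (g⁻¹ * k) • S₀ := by
        rw [mul_smul, hk, Set.mem_smul_set_iff_inv_smul_mem, inv_inv, hgpq]
        exact h1'
      have hqr'' : (q, r) ∈ (g⁻¹ * k) • S₀ := by
        rw [mul_smul, hk, Set.mem_smul_set_iff_inv_smul_mem, inv_inv, hgqr]
        exact h2'
      have hfin := hkey (g⁻¹ * k) hpq'' hqr''
      rw [mul_smul] at hfin
      calc S' = k • S₀ := hk.symm
        _ = g • (g⁻¹ • (k • S₀)) := (smul_inv_smul g _).symm
        _ = g • S₀ := by rw [hfin]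
end

section
/- Let Σ be a connected (X,2)-arc-transitive graph of valency 4 and let Δ be a self-paired X-orbit on Arc₃(Σ). Then J(Δ) is a self-paired X-orbit on J(Σ), and ℷ(Σ,Δ) is isomorphic to Ψ(Σ,J(Δ)). -/
open Pointwise

/-- A 2-path of `G`, as an ordered triple with distinct vertices. -/
def Path2 {V : Type*} (G : SimpleGraph V) : Type _ :=
  {p : V × V × V // G.Adj p.1 p.2.1 ∧ G.Adj p.2.1 p.2.2 ∧ p.1 ≠ p.2.2}

/-- The reverse of a 2-path. -/
def p2rev {V : Type*} (G : SimpleGraph V) (p : Path2 G) : Path2 G :=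
  ⟨(p.1.2.2, p.1.2.1, p.1.1), p.2.2.1.symm, p.2.1.symm, p.2.2.2.symm⟩

/-- 2-paths of `G` up to reversal. -/
def P2 {V : Type*} (G : SimpleGraph V) : Type _ :=
  Quot (fun p q : Path2 G => q = p2rev G p)

/-- The 2-path (mod reversal) determined by an ordered 2-path. -/
def P2.mk {V : Type*} (G : SimpleGraph V) (p : Path2 G) : P2 G := Quot.mk _ p

/-- The graph `ℷ(G,Δ)` on the 2-paths of `G`:  `[α₀,α₁,α₂]` is adjacent to
`[α₁,α₂,α₃]` whenever `(α₀,α₁,α₂,α₃) ∈ Δ`. -/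
def gimel {V : Type*} (G : SimpleGraph V) (Δ : Set (V × V × V × V)) : SimpleGraph (P2 G) :=
  SimpleGraph.fromRel (fun z w => ∃ p q : Path2 G,
    z = P2.mk G p ∧ w = P2.mk G q ∧ p.1.2.1 = q.1.1 ∧ p.1.2.2 = q.1.2.1 ∧
    (p.1.1, p.1.2.1, p.1.2.2, q.1.2.2) ∈ Δ)

/-- The block `P_τ` of all 2-paths of `G` with middle vertex `τ`. -/
def PBlock {V : Type*} (G : SimpleGraph V) (τ : V) : Set (P2 G) :=
  {z | ∃ p : Path2 G, z = P2.mk G p ∧ p.1.2.1 = τ}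

/-- `x ∈ X` maps the 2-path `z` to the 2-path `w` (under the induced action of `X`
on 2-paths mod reversal). -/
def P2Maps (X : Type*) {V : Type*} [Group X] [MulAction X V] (G : SimpleGraph V)
    (x : X) (z w : P2 G) : Prop :=
  ∃ p q : Path2 G, z = P2.mk G p ∧ w = P2.mk G q ∧
    (q.1 = x • p.1 ∨ q.1 = x • (p2rev G p).1)

/-- `J(G)`: the set of pairs `([τ',τ,τ''],[σ',σ,σ''])` of 2-paths of `G` such that
`σ ∈ G(τ) ∖ {τ',τ''}` and `τ ∈ G(σ) ∖ {σ',σ''}`. -/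
def JSet {V : Type*} (G : SimpleGraph V) : Set (P2 G × P2 G) :=
  {pq | ∃ p q : Path2 G, pq.1 = P2.mk G p ∧ pq.2 = P2.mk G q ∧
    G.Adj p.1.2.1 q.1.2.1 ∧ q.1.2.1 ≠ p.1.1 ∧ q.1.2.1 ≠ p.1.2.2 ∧
    p.1.2.1 ≠ q.1.1 ∧ p.1.2.1 ≠ q.1.2.2}

/-- `J(Δ)` for a set of 3-arcs `Δ` of a tetravalent graph `G`:  for a 3-arc
`(τ₁,τ,σ,σ₁) ∈ Δ` we take the pair `([τ₂,τ,τ₃],[σ₂,σ,σ₃])`, where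
`G(τ) = {σ,τ₁,τ₂,τ₃}` and `G(σ) = {τ,σ₁,σ₂,σ₃}`. -/
def JOfArc3 {V : Type*} (G : SimpleGraph V) (Δ : Set (V × V × V × V)) :
    Set (P2 G × P2 G) :=
  {pq | ∃ t ∈ Δ, ∃ p q : Path2 G, pq = (P2.mk G p, P2.mk G q) ∧
    p.1.2.1 = t.2.1 ∧ q.1.2.1 = t.2.2.1 ∧
    ({p.1.1, p.1.2.2} : Set V) = G.neighborSet t.2.1 \ {t.1, t.2.2.1} ∧
    ({q.1.1, q.1.2.2} : Set V) = G.neighborSet t.2.2.1 \ {t.2.1, t.2.2.2}}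

/-- The graph `Ψ(G,Λ)` on the 2-paths of `G`, two 2-paths being adjacent iff the pair
they form lies in `Λ`. -/
def Psi {V : Type*} (G : SimpleGraph V) (Λ : Set (P2 G × P2 G)) : SimpleGraph (P2 G) :=
  SimpleGraph.fromRel (fun z w => (z, w) ∈ Λ)

/-- `Λ` is a self-paired `X`-orbit on `J(G)`. -/
def JSelfPairedOrbit (X : Type*) {V : Type*} [Group X] [MulAction X V] (G : SimpleGraph V)
    (Λ : Set (P2 G × P2 G)) : Prop :=
  Λ ⊆ JSet G ∧ (∀ pq ∈ Λ, (pq.2, pq.1) ∈ Λ) ∧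
  ∃ pq₀ ∈ Λ, ∀ pq : P2 G × P2 G,
    pq ∈ Λ ↔ ∃ x : X, P2Maps X G x pq₀.1 pq.1 ∧ P2Maps X G x pq₀.2 pq.2

/-! ### Auxiliary lemmas -/

theorem tripleExt {α : Type*} {a b : α × α × α} (h1 : a.1 = b.1) (h2 : a.2.1 = b.2.1)
    (h3 : a.2.2 = b.2.2) : a = b := by
  obtain ⟨a1, a2, a3⟩ := a
  obtain ⟨b1, b2, b3⟩ := b
  cases h1; cases h2; cases h3; rfl

theorem p2rev_p2rev {V : Type*} (G : SimpleGraph V) (p : Path2 G) :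
    p2rev G (p2rev G p) = p := Subtype.ext rfl

theorem P2.mk_eq_iff {V : Type*} {G : SimpleGraph V} {p q : Path2 G} :
    P2.mk G p = P2.mk G q ↔ q = p ∨ q = p2rev G p := by
  constructor
  · intro h
    have hresp : ∀ a b : Path2 G, b = p2rev G a →
        ((a = p ∨ a = p2rev G p) = (b = p ∨ b = p2rev G p)) := by
      rintro a b rfl
      apply propext
      constructor
      · rintro (rfl | rfl)
        · exact Or.inr rfl
        · exact Or.inl (p2rev_p2rev G p)
      · rintro (h1 | h2)
        · right
          rw [← h1, p2rev_p2rev]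
        · left
          have := congrArg (p2rev G) h2
          rwa [p2rev_p2rev, p2rev_p2rev] at this
    have h2 : (p = p ∨ p = p2rev G p) = (q = p ∨ q = p2rev G p) :=
      congrArg (Quot.lift (fun r : Path2 G => r = p ∨ r = p2rev G p) hresp) h
    exact h2 ▸ Or.inl rfl
  · rintro (rfl | h)
    · rfl
    · exact Quot.sound h

/-- Two ordered 2-paths representing the same element of `P2 G` have the same middle
vertex and the same set of endpoints. -/
theorem P2.rep_inv {V : Type*} {G : SimpleGraph V} {p q : Path2 G}
    (h : P2.mk G p = P2.mk G q) :
    q.1.2.1 = p.1.2.1 ∧ ({q.1.1, q.1.2.2} : Set V) = {p.1.1, p.1.2.2} := by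
  rcases P2.mk_eq_iff.mp h with rfl | rfl
  · exact ⟨rfl, rfl⟩
  · exact ⟨rfl, Set.pair_comm _ _⟩

/-- The "complementation" relation on 2-paths mod reversal: `w` is obtained from `z`
by replacing the two endpoints with the other two neighbours of the middle vertex. -/
def Rrel {V : Type*} (G : SimpleGraph V) (z w : P2 G) : Prop :=
  ∃ p q : Path2 G, z = P2.mk G p ∧ w = P2.mk G q ∧ q.1.2.1 = p.1.2.1 ∧
    ({q.1.1, q.1.2.2} : Set V) = G.neighborSet p.1.2.1 \ {p.1.1, p.1.2.2}

/-- For a connected `(X,2)`-arc-transitive graph `G` of valency `4` and a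
self-paired `X`-orbit `Δ` on the 3-arcs of `G`, the set `J(Δ)` is a self-paired `X`-orbit
on `J(G)`, and `ℷ(G,Δ) ≅ Ψ(G,J(Δ))`. -/
theorem gimel_iso_psi {V X : Type*} [Fintype V] [Group X] [MulAction X V]
    (G : SimpleGraph V) (hreg : Regular G 4) (hconn : G.Connected)
    (h2at : Arc2TransGraph X G)
    (Δ : Set (V × V × V × V)) (hΔ : SelfPairedOrbit3 X G Δ) :
    JSelfPairedOrbit X G (JOfArc3 G Δ) ∧
      Nonempty (gimel G Δ ≃g Psi G (JOfArc3 G Δ)) := by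
  classical
  obtain ⟨⟨hpres, hvt, hat⟩, h2t⟩ := h2at
  obtain ⟨hA3, ⟨t₀, ht₀Δ, horb⟩, hrevΔ⟩ := hΔ
  -- Adjacency is preserved in both directions.
  have hadj_iff : ∀ (x : X) (u w : V), G.Adj u w ↔ G.Adj (x • u) (x • w) := by
    intro x u w
    constructor
    · exact hpres x u w
    · intro h
      have := hpres x⁻¹ _ _ h
      simpa using this
  have nbr_smul : ∀ (x : X) (v : V), G.neighborSet (x • v) = x • G.neighborSet v := by
    intro x v
    ext u
    constructor
    · intro h
      refine ⟨x⁻¹ • u, ?_, by simp⟩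
      have := hpres x⁻¹ _ _ h
      simpa using this
    · rintro ⟨b, hb, rfl⟩
      exact hpres x _ _ hb
  have smul_pair : ∀ (x : X) (a b : V), x • ({a, b} : Set V) = {x • a, x • b} := by
    intro x a b
    simp [Set.smul_set_insert, Set.smul_set_singleton]
  have pair_sub : ∀ {a b v : V}, G.Adj v a → G.Adj v b → ({a, b} : Set V) ⊆ G.neighborSet v := by
    intro a b v h1 h2 u hu
    rcases hu with rfl | hu
    · exact h1
    · rw [Set.mem_singleton_iff] at hu
      subst hu
      exact h2
  have key : ∀ (x : X) (a v b : V) (p : Path2 G),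
      ({p.1.1, p.1.2.2} : Set V) = G.neighborSet v \ {a, b} →
      G.neighborSet (x • v) \ {x • a, x • b} = {x • p.1.1, x • p.1.2.2} := by
    intro x a v b p hs
    rw [nbr_smul, ← smul_pair, ← Set.smul_set_sdiff, ← hs, smul_pair]
  -- Existence of the "complementary" 2-path.
  have hex : ∀ a v b : V, G.Adj a v → G.Adj v b → a ≠ b → ∃ p : Path2 G, p.1.2.1 = v ∧
      ({p.1.1, p.1.2.2} : Set V) = G.neighborSet v \ {a, b} := by
    intro a v b ha hb hab
    have hsub : ({a, b} : Set V) ⊆ G.neighborSet v := pair_sub ha.symm hb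
    have hcard : (G.neighborSet v \ {a, b}).ncard = 2 := by
      rw [Set.ncard_diff hsub (Set.toFinite _), hreg, Set.ncard_pair hab]
    obtain ⟨c, d, hcd, hS⟩ := Set.ncard_eq_two.mp hcard
    have hc : c ∈ G.neighborSet v := by
      have : c ∈ G.neighborSet v \ {a, b} := by
        rw [hS]; exact Set.mem_insert _ _
      exact this.1
    have hd : d ∈ G.neighborSet v := by
      have : d ∈ G.neighborSet v \ {a, b} := by
        rw [hS]; exact Set.mem_insert_of_mem _ rfl
      exact this.1
    exact ⟨⟨(c, v, d), hc.symm, hd, hcd⟩, rfl, hS.symm⟩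
  -- The complementation relation is total, symmetric and functional.
  have Rtotal : ∀ z : P2 G, ∃ w, Rrel G z w := by
    refine Quot.ind ?_
    intro p
    obtain ⟨q, hm, hs⟩ := hex p.1.1 p.1.2.1 p.1.2.2 p.2.1 p.2.2.1 p.2.2.2
    exact ⟨P2.mk G q, p, q, rfl, rfl, hm, hs⟩
  have Rsymm : ∀ z w, Rrel G z w → Rrel G w z := by
    rintro z w ⟨p, q, hz, hw, hm, hs⟩
    refine ⟨q, p, hw, hz, hm.symm, ?_⟩
    rw [hm, hs]
    exact (Set.diff_diff_cancel_left (pair_sub p.2.1.symm p.2.2.1)).symm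
  have Rfunc : ∀ z w w', Rrel G z w → Rrel G z w' → w = w' := by
    rintro z w w' ⟨p, q, hz, hw, hm, hs⟩ ⟨p', q', hz', hw', hm', hs'⟩
    obtain ⟨hmp, hsp⟩ := P2.rep_inv (hz.symm.trans hz')
    have hmid : q'.1.2.1 = q.1.2.1 := by rw [hm', hm, hmp]
    have hset : ({q'.1.1, q'.1.2.2} : Set V) = {q.1.1, q.1.2.2} := by
      rw [hs', hs, hmp, hsp]
    rw [hw, hw']
    rcases Set.pair_eq_pair_iff.mp hset with ⟨h1, h2⟩ | ⟨h1, h2⟩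
    · exact P2.mk_eq_iff.mpr (Or.inl (Subtype.ext (tripleExt h1 hmid h2)))
    · exact P2.mk_eq_iff.mpr (Or.inr (Subtype.ext (tripleExt h1 hmid h2)))
  set f : P2 G → P2 G := fun z => Classical.choose (Rtotal z) with hfdef
  have hf : ∀ z, Rrel G z (f z) := fun z => Classical.choose_spec (Rtotal z)
  have feq : ∀ {z w}, Rrel G z w → f z = w := fun h => Rfunc _ _ _ (hf _) h
  have finv : ∀ z, f (f z) = z := fun z => feq (Rsymm _ _ (hf z))
  have finj : Function.Injective f := fun a b h => by rw [← finv a, h, finv b]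
  -- Lemma A : the image under f of a gimel-edge is in J(Δ).
  have hA : ∀ p q : Path2 G, p.1.2.1 = q.1.1 → p.1.2.2 = q.1.2.1 →
      (p.1.1, p.1.2.1, p.1.2.2, q.1.2.2) ∈ Δ →
      (f (P2.mk G p), f (P2.mk G q)) ∈ JOfArc3 G Δ := by
    intro p q h1 h2 ht
    obtain ⟨p', a, hz', hfz, hma, hsa⟩ := hf (P2.mk G p)
    obtain ⟨q', b, hw', hfw, hmb, hsb⟩ := hf (P2.mk G q)
    obtain ⟨hmp, hsp⟩ := P2.rep_inv hz'
    obtain ⟨hmq, hsq⟩ := P2.rep_inv hw'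
    refine ⟨(p.1.1, p.1.2.1, p.1.2.2, q.1.2.2), ht, a, b, ?_, ?_, ?_, ?_, ?_⟩
    · rw [hfz, hfw]
    · show a.1.2.1 = p.1.2.1
      rw [hma, hmp]
    · show b.1.2.1 = p.1.2.2
      rw [hmb, hmq, ← h2]
    · show ({a.1.1, a.1.2.2} : Set V) = G.neighborSet p.1.2.1 \ {p.1.1, p.1.2.2}
      rw [hsa, hmp, hsp]
    · show ({b.1.1, b.1.2.2} : Set V) = G.neighborSet p.1.2.2 \ {p.1.2.1, q.1.2.2}
      rw [hsb, hmq, hsq, h2, h1]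
  -- Lemma B : preimages under f of J(Δ)-pairs give gimel-edges.
  have hB : ∀ u w : P2 G, (u, w) ∈ JOfArc3 G Δ →
      ∃ p q : Path2 G, f u = P2.mk G p ∧ f w = P2.mk G q ∧ p.1.2.1 = q.1.1 ∧
        p.1.2.2 = q.1.2.1 ∧ (p.1.1, p.1.2.1, p.1.2.2, q.1.2.2) ∈ Δ := by
    rintro u w ⟨t, ht, p', q', heq, hmp, hmq, hsp, hsq⟩
    have ht3 := hA3 t ht
    have hu : u = P2.mk G p' := congrArg Prod.fst heq
    have hw : w = P2.mk G q' := congrArg Prod.snd heq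
    refine ⟨⟨(t.1, t.2.1, t.2.2.1), ht3.1, ht3.2.1, ht3.2.2.2.1⟩,
            ⟨(t.2.1, t.2.2.1, t.2.2.2), ht3.2.1, ht3.2.2.1, ht3.2.2.2.2⟩, ?_, ?_, rfl, rfl, ?_⟩
    · apply feq
      refine ⟨p', _, hu, rfl, hmp.symm, ?_⟩
      show ({t.1, t.2.2.1} : Set V) = G.neighborSet p'.1.2.1 \ {p'.1.1, p'.1.2.2}
      rw [hmp, hsp]
      exact (Set.diff_diff_cancel_left (pair_sub ht3.1.symm ht3.2.1)).symm
    · apply feq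
      refine ⟨q', _, hw, rfl, hmq.symm, ?_⟩
      show ({t.2.1, t.2.2.2} : Set V) = G.neighborSet q'.1.2.1 \ {q'.1.1, q'.1.2.2}
      rw [hmq, hsq]
      exact (Set.diff_diff_cancel_left (pair_sub ht3.2.1.symm ht3.2.2.1)).symm
    · show (t.1, t.2.1, t.2.2.1, t.2.2.2) ∈ Δ
      have h : (t.1, t.2.1, t.2.2.1, t.2.2.2) = t := rfl
      rw [h]; exact ht
  -- The chosen base pair in J(Δ).
  have ht₀3 := hA3 t₀ ht₀Δ
  obtain ⟨p₀, hmp₀, hsp₀⟩ := hex t₀.1 t₀.2.1 t₀.2.2.1 ht₀3.1 ht₀3.2.1 ht₀3.2.2.2.1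
  obtain ⟨q₀, hmq₀, hsq₀⟩ := hex t₀.2.1 t₀.2.2.1 t₀.2.2.2 ht₀3.2.1 ht₀3.2.2.1 ht₀3.2.2.2.2
  constructor
  · -- `J(Δ)` is a self-paired X-orbit on `J(G)`.
    refine ⟨?_, ?_, ?_⟩
    · -- J(Δ) ⊆ J(G)
      rintro pq ⟨t, ht, p, q, heq, hmp, hmq, hsp, hsq⟩
      have ht3 := hA3 t ht
      have hnp : ∀ u ∈ ({p.1.1, p.1.2.2} : Set V), u ≠ t.1 ∧ u ≠ t.2.2.1 := by
        intro u hu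
        rw [hsp] at hu
        exact ⟨fun h => hu.2 (by rw [h]; exact Set.mem_insert _ _),
               fun h => hu.2 (by rw [h]; exact Set.mem_insert_of_mem _ rfl)⟩
      have hnq : ∀ u ∈ ({q.1.1, q.1.2.2} : Set V), u ≠ t.2.1 ∧ u ≠ t.2.2.2 := by
        intro u hu
        rw [hsq] at hu
        exact ⟨fun h => hu.2 (by rw [h]; exact Set.mem_insert _ _),
               fun h => hu.2 (by rw [h]; exact Set.mem_insert_of_mem _ rfl)⟩
      refine ⟨p, q, by rw [heq], by rw [heq], ?_, ?_, ?_, ?_, ?_⟩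
      · rw [hmp, hmq]; exact ht3.2.1
      · rw [hmq]; exact ((hnp _ (Set.mem_insert _ _)).2).symm
      · rw [hmq]; exact ((hnp _ (Set.mem_insert_of_mem _ rfl)).2).symm
      · rw [hmp]; exact ((hnq _ (Set.mem_insert _ _)).1).symm
      · rw [hmp]; exact ((hnq _ (Set.mem_insert_of_mem _ rfl)).1).symm
    · -- self-paired
      rintro pq ⟨t, ht, p, q, heq, hmp, hmq, hsp, hsq⟩
      refine ⟨rev3 t, hrevΔ t ht, q, p, by rw [heq], ?_, ?_, ?_, ?_⟩
      · exact hmq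
      · exact hmp
      · show ({q.1.1, q.1.2.2} : Set V) = G.neighborSet t.2.2.1 \ {t.2.2.2, t.2.1}
        rw [hsq, Set.pair_comm t.2.1 t.2.2.2]
      · show ({p.1.1, p.1.2.2} : Set V) = G.neighborSet t.2.1 \ {t.2.2.1, t.1}
        rw [hsp, Set.pair_comm t.1 t.2.2.1]
    · -- the orbit statement
      refine ⟨(P2.mk G p₀, P2.mk G q₀), ⟨t₀, ht₀Δ, p₀, q₀, rfl, hmp₀, hmq₀, hsp₀, hsq₀⟩, ?_⟩
      intro pq
      constructor
      · rintro ⟨t, ht, p, q, heq, hmp, hmq, hsp, hsq⟩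
        have ht' := ht
        rw [horb] at ht'
        obtain ⟨x, hx⟩ := MulAction.mem_orbit_iff.mp ht'
        refine ⟨x, ⟨p₀, p, rfl, congrArg Prod.fst heq, ?_⟩,
                   ⟨q₀, q, rfl, congrArg Prod.snd heq, ?_⟩⟩
        · have hmid : p.1.2.1 = x • p₀.1.2.1 := by
            rw [hmp, ← hx, hmp₀]; rfl
          have hends : ({p.1.1, p.1.2.2} : Set V) = {x • p₀.1.1, x • p₀.1.2.2} := by
            rw [hsp, ← hx]
            exact key x t₀.1 t₀.2.1 t₀.2.2.1 p₀ hsp₀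
          rcases Set.pair_eq_pair_iff.mp hends with ⟨e1, e2⟩ | ⟨e1, e2⟩
          · exact Or.inl (tripleExt e1 hmid e2)
          · exact Or.inr (tripleExt e1 hmid e2)
        · have hmid : q.1.2.1 = x • q₀.1.2.1 := by
            rw [hmq, ← hx, hmq₀]; rfl
          have hends : ({q.1.1, q.1.2.2} : Set V) = {x • q₀.1.1, x • q₀.1.2.2} := by
            rw [hsq, ← hx]
            exact key x t₀.2.1 t₀.2.2.1 t₀.2.2.2 q₀ hsq₀
          rcases Set.pair_eq_pair_iff.mp hends with ⟨e1, e2⟩ | ⟨e1, e2⟩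
          · exact Or.inl (tripleExt e1 hmid e2)
          · exact Or.inr (tripleExt e1 hmid e2)
      · rintro ⟨x, ⟨p1, q1, hp1, hq1, hor1⟩, ⟨p2, q2, hp2, hq2, hor2⟩⟩
        obtain ⟨hm1, hs1⟩ := P2.rep_inv (hp1 : P2.mk G p₀ = P2.mk G p1)
        obtain ⟨hm2, hs2⟩ := P2.rep_inv (hp2 : P2.mk G q₀ = P2.mk G p2)
        have hq1m : q1.1.2.1 = x • p₀.1.2.1 := by
          rcases hor1 with h | h
          · rw [show q1.1.2.1 = (x • p1.1).2.1 from congrArg (fun r : V × V × V => r.2.1) h,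
              show (x • p1.1).2.1 = x • p1.1.2.1 from rfl, hm1]
          · rw [show q1.1.2.1 = (x • (p2rev G p1).1).2.1 from
              congrArg (fun r : V × V × V => r.2.1) h,
              show (x • (p2rev G p1).1).2.1 = x • p1.1.2.1 from rfl, hm1]
        have hq1s : ({q1.1.1, q1.1.2.2} : Set V) = x • ({p₀.1.1, p₀.1.2.2} : Set V) := by
          rcases hor1 with h | h
          · rw [show q1.1.1 = x • p1.1.1 from congrArg (fun r : V × V × V => r.1) h,
              show q1.1.2.2 = x • p1.1.2.2 from congrArg (fun r : V × V × V => r.2.2) h,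
              ← smul_pair, hs1]
          · rw [show q1.1.1 = x • p1.1.2.2 from congrArg (fun r : V × V × V => r.1) h,
              show q1.1.2.2 = x • p1.1.1 from congrArg (fun r : V × V × V => r.2.2) h,
              ← smul_pair, Set.pair_comm p1.1.2.2 p1.1.1, hs1]
        have hq2m : q2.1.2.1 = x • q₀.1.2.1 := by
          rcases hor2 with h | h
          · rw [show q2.1.2.1 = (x • p2.1).2.1 from congrArg (fun r : V × V × V => r.2.1) h,
              show (x • p2.1).2.1 = x • p2.1.2.1 from rfl, hm2]
          · rw [show q2.1.2.1 = (x • (p2rev G p2).1).2.1 from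
              congrArg (fun r : V × V × V => r.2.1) h,
              show (x • (p2rev G p2).1).2.1 = x • p2.1.2.1 from rfl, hm2]
        have hq2s : ({q2.1.1, q2.1.2.2} : Set V) = x • ({q₀.1.1, q₀.1.2.2} : Set V) := by
          rcases hor2 with h | h
          · rw [show q2.1.1 = x • p2.1.1 from congrArg (fun r : V × V × V => r.1) h,
              show q2.1.2.2 = x • p2.1.2.2 from congrArg (fun r : V × V × V => r.2.2) h,
              ← smul_pair, hs2]
          · rw [show q2.1.1 = x • p2.1.2.2 from congrArg (fun r : V × V × V => r.1) h,
              show q2.1.2.2 = x • p2.1.1 from congrArg (fun r : V × V × V => r.2.2) h,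
              ← smul_pair, Set.pair_comm p2.1.2.2 p2.1.1, hs2]
        refine ⟨x • t₀, ?_, q1, q2, ?_, ?_, ?_, ?_, ?_⟩
        · rw [horb]; exact MulAction.mem_orbit _ x
        · rw [← hq1, ← hq2]
        · show q1.1.2.1 = x • t₀.2.1
          rw [hq1m, hmp₀]
        · show q2.1.2.1 = x • t₀.2.2.1
          rw [hq2m, hmq₀]
        · show ({q1.1.1, q1.1.2.2} : Set V) =
            G.neighborSet (x • t₀.2.1) \ {x • t₀.1, x • t₀.2.2.1}
          rw [hq1s, key x t₀.1 t₀.2.1 t₀.2.2.1 p₀ hsp₀, smul_pair]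
        · show ({q2.1.1, q2.1.2.2} : Set V) =
            G.neighborSet (x • t₀.2.2.1) \ {x • t₀.2.1, x • t₀.2.2.2}
          rw [hq2s, key x t₀.2.1 t₀.2.2.1 t₀.2.2.2 q₀ hsq₀, smul_pair]
  · -- the isomorphism
    refine ⟨⟨⟨f, f, finv, finv⟩, ?_⟩⟩
    intro z w
    show (Psi G (JOfArc3 G Δ)).Adj (f z) (f w) ↔ (gimel G Δ).Adj z w
    unfold Psi gimel
    rw [SimpleGraph.fromRel_adj, SimpleGraph.fromRel_adj]
    constructor
    · rintro ⟨hne, hmem | hmem⟩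
      · obtain ⟨p, q, h1, h2, h3, h4, h5⟩ := hB _ _ hmem
        rw [finv] at h1 h2
        exact ⟨fun h => hne (by rw [h]), Or.inl ⟨p, q, h1, h2, h3, h4, h5⟩⟩
      · obtain ⟨p, q, h1, h2, h3, h4, h5⟩ := hB _ _ hmem
        rw [finv] at h1 h2
        exact ⟨fun h => hne (by rw [h]), Or.inr ⟨p, q, h1, h2, h3, h4, h5⟩⟩
    · rintro ⟨hne, hmem | hmem⟩
      · obtain ⟨p, q, hz, hw, h3, h4, h5⟩ := hmem
        refine ⟨fun h => hne (finj h), Or.inl ?_⟩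
        rw [hz, hw]
        exact hA p q h3 h4 h5
      · obtain ⟨p, q, hw, hz, h3, h4, h5⟩ := hmem
        refine ⟨fun h => hne (finj h), Or.inr ?_⟩
        rw [hz, hw]
        exact hA p q h3 h4 h5
end

section
/- Let Γ be an X-symmetric graph with an X-invariant partition B of V(Γ) such that the quotient graph Γ_B is connected and (X,2)-arc-transitive. Let B ∈ B and let C, D be two distinct neighbours of B in Γ_B. If the bipartite subgraph Γ[B,C] is connected and Γ(C) ∩ B ∩ Γ(D) ≠ ∅, then Γ is connected. -/
open Pointwise

/-- For a graph `H` whose vertices carry an induced `X`-action described by a relation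
`M x z w` (“`x` maps `z` to `w`”), `H` is `X`-symmetric:  `X` preserves adjacency and is
transitive on vertices and on arcs. -/
def RelXSymm (X : Type*) {W : Type*} [Group X] (M : X → W → W → Prop)
    (H : SimpleGraph W) : Prop :=
  (∀ (x : X) (z w z' w' : W), H.Adj z w → M x z z' → M x w w' → H.Adj z' w') ∧
  (∀ z w : W, ∃ x : X, M x z w) ∧
  (∀ z₁ z₂ w₁ w₂ : W, H.Adj z₁ z₂ → H.Adj w₁ w₂ → ∃ x : X, M x z₁ w₁ ∧ M x z₂ w₂)

/-- `X` is transitive on the 2-arcs of `H`, the action being described by `M`. -/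
def RelArc2Trans (X : Type*) {W : Type*} [Group X] (M : X → W → W → Prop)
    (H : SimpleGraph W) : Prop :=
  ∀ z₁ z₂ z₃ w₁ w₂ w₃ : W, H.Adj z₁ z₂ → H.Adj z₂ z₃ → z₁ ≠ z₃ →
    H.Adj w₁ w₂ → H.Adj w₂ w₃ → w₁ ≠ w₃ →
    ∃ x : X, M x z₁ w₁ ∧ M x z₂ w₂ ∧ M x z₃ w₃

/-- `X` is regular on the arcs of `H`, the action being described by `M`. -/
def RelArc1Reg (X : Type*) {W : Type*} [Group X] (M : X → W → W → Prop)
    (H : SimpleGraph W) : Prop :=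
  ∀ z₁ z₂ w₁ w₂ : W, H.Adj z₁ z₂ → H.Adj w₁ w₂ →
    ∃! x : X, M x z₁ w₁ ∧ M x z₂ w₂

/-- `X` is regular on the 2-arcs of `H`, the action being described by `M`. -/
def RelArc2Reg (X : Type*) {W : Type*} [Group X] (M : X → W → W → Prop)
    (H : SimpleGraph W) : Prop :=
  ∀ z₁ z₂ z₃ w₁ w₂ w₃ : W, H.Adj z₁ z₂ → H.Adj z₂ z₃ → z₁ ≠ z₃ →
    H.Adj w₁ w₂ → H.Adj w₂ w₃ → w₁ ≠ w₃ →
    ∃! x : X, M x z₁ w₁ ∧ M x z₂ w₂ ∧ M x z₃ w₃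

/-- The bipartite subgraph of a graph `H` induced by two disjoint sets `U`, `T` of
vertices, keeping only the edges between `U` and `T`. -/
def biSub {W : Type*} (H : SimpleGraph W) (U T : Set W) : SimpleGraph ↥(U ∪ T) :=
  SimpleGraph.fromRel (fun a b => H.Adj ↑a ↑b ∧ ((↑a ∈ U ∧ ↑b ∈ T) ∨ (↑a ∈ T ∧ ↑b ∈ U)))

/-- The perfect matching with three edges, `3K₂`. -/
def threeK2 : SimpleGraph (Fin 3 × Fin 2) := SimpleGraph.fromRel (fun p q => p.1 = q.1)

/-- The complete bipartite graph `K_{3,3}`. -/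
def K33 : SimpleGraph (Fin 3 ⊕ Fin 3) := completeBipartiteGraph (Fin 3) (Fin 3)

/-- `K_{3,3}` minus a perfect matching. -/
def K33m3K2 : SimpleGraph (Fin 3 ⊕ Fin 3) :=
  SimpleGraph.fromRel (fun a b => ∃ i j : Fin 3, i ≠ j ∧ a = Sum.inl i ∧ b = Sum.inr j)

/-- The neighbourhood `Γ(B) = ⋃_{u ∈ B} Γ(u)` of a set of vertices. -/
def nbhd {V : Type*} (Γ : SimpleGraph V) (B : Set V) : Set V :=
  ⋃ u ∈ B, Γ.neighborSet u

/-- Two sets of vertices are adjacent if they are distinct and joined by an edge. -/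
def QAdj {V : Type*} (Γ : SimpleGraph V) (B C : Set V) : Prop :=
  B ≠ C ∧ ∃ u ∈ B, ∃ w ∈ C, Γ.Adj u w

/-- The quotient graph of `Γ` with respect to a partition `P` of its vertex set. -/
def quotGraph {V : Type*} (Γ : SimpleGraph V) (P : Set (Set V)) : SimpleGraph ↥P :=
  SimpleGraph.fromRel (fun B C => ∃ u ∈ (B : Set V), ∃ w ∈ (C : Set V), Γ.Adj u w)

/-- `P` is an `X`-invariant partition of the vertex set. -/
def XInvariantPartition (X : Type*) {V : Type*} [Group X] [MulAction X V]
    (P : Set (Set V)) : Prop :=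
  Setoid.IsPartition P ∧ ∀ (x : X), ∀ B ∈ P, x • B ∈ P

/-- The partition `P` is nontrivial: `1 < |B| < |V|` for each block `B`. -/
def NontrivialBlocks {V : Type*} [Fintype V] (P : Set (Set V)) : Prop :=
  ∀ B ∈ P, 1 < B.ncard ∧ B.ncard < Fintype.card V

/-- `x ∈ X` maps the block `B` to the block `C`. -/
def BlockMaps (X : Type*) {V : Type*} [Group X] [MulAction X V] (P : Set (Set V))
    (x : X) (B C : ↥P) : Prop :=
  (C : Set V) = x • (B : Set V)


section Aux
variable {V X : Type*} [Group X] [MulAction X V]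

lemma adj_smul_iff' {Γ : SimpleGraph V} (hp : AdjPres X Γ) (x : X) {u w : V} :
    Γ.Adj (x • u) (x • w) ↔ Γ.Adj u w := by
  constructor
  · intro h
    have := hp x⁻¹ _ _ h
    simpa using this
  · exact hp x u w

lemma mem_nbhd' {Γ : SimpleGraph V} {S : Set V} {u : V} :
    u ∈ nbhd Γ S ↔ ∃ w ∈ S, Γ.Adj w u := by
  simp [nbhd, SimpleGraph.mem_neighborSet]

lemma nbhd_smul' {Γ : SimpleGraph V} (hp : AdjPres X Γ) (x : X) (S : Set V) :
    nbhd Γ (x • S) = x • nbhd Γ S := by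
  ext u
  rw [mem_nbhd']
  constructor
  · rintro ⟨w, hw, hadj⟩
    obtain ⟨w₀, hw₀, rfl⟩ := hw
    refine ⟨x⁻¹ • u, mem_nbhd'.2 ⟨w₀, hw₀, ?_⟩, by simp⟩
    have : Γ.Adj (x • w₀) (x • (x⁻¹ • u)) := by simpa using hadj
    exact (adj_smul_iff' hp x).1 this
  · rintro ⟨u₀, hu₀, rfl⟩
    obtain ⟨w₀, hw₀, hadj⟩ := mem_nbhd'.1 hu₀
    exact ⟨x • w₀, Set.smul_mem_smul_set hw₀, hp x _ _ hadj⟩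

/-- The two-sided arc set `(Γ(C) ∩ B) ∪ (Γ(B) ∩ C)`. -/
def Sset (Γ : SimpleGraph V) (A C : Set V) : Set V :=
  (nbhd Γ C ∩ A) ∪ (nbhd Γ A ∩ C)

lemma Sset_smul {Γ : SimpleGraph V} (hp : AdjPres X Γ) (x : X) (A C : Set V) :
    Sset Γ (x • A) (x • C) = x • Sset Γ A C := by
  simp only [Sset, nbhd_smul' hp, ← Set.smul_set_inter, ← Set.smul_set_union]

end Aux

/-- Let `Γ` be an `X`-symmetric graph with an `X`-invariant partition `P`
such that the quotient graph is connected and `(X,2)`-arc-transitive.  If, for a block `B`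
and two distinct neighbouring blocks `C`, `D`, the bipartite graph `Γ[B,C]` is connected
and `Γ(C) ∩ B ∩ Γ(D) ≠ ∅`, then `Γ` is connected. -/
theorem connected_of_quotient_conditions {V X : Type*} [Fintype V] [Group X] [MulAction X V]
    (Γ : SimpleGraph V) (hsym : XSymm X Γ)
    (P : Set (Set V)) (hP : XInvariantPartition X P)
    (hqconn : (quotGraph Γ P).Connected)
    (hqsym : RelXSymm X (BlockMaps X P) (quotGraph Γ P))
    (hq2at : RelArc2Trans X (BlockMaps X P) (quotGraph Γ P))
    (B C D : ↥P) (hBC : (quotGraph Γ P).Adj B C) (hBD : (quotGraph Γ P).Adj B D)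
    (hCD : C ≠ D)
    (hbip : (biSub Γ (nbhd Γ ↑C ∩ ↑B) (nbhd Γ ↑B ∩ ↑C)).Connected)
    (hne : (nbhd Γ ↑C ∩ ↑B ∩ nbhd Γ ↑D).Nonempty) :
    Γ.Connected := by
  obtain ⟨hpres, hvtrans, hatrans⟩ := hsym
  obtain ⟨v, hv⟩ := hne
  obtain ⟨⟨hvC, hvB⟩, hvD⟩ := hv
  have hv1 : v ∈ Sset Γ ↑B ↑C := Set.mem_union_left _ ⟨hvC, hvB⟩
  have hvBD : v ∈ Sset Γ ↑B ↑D := Set.mem_union_left _ ⟨hvD, hvB⟩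
  -- all points of Sset Γ B C are mutually reachable (via the bipartite connectivity)
  have reachS : ∀ u ∈ Sset Γ (↑B : Set V) ↑C, ∀ w ∈ Sset Γ (↑B : Set V) ↑C,
      Γ.Reachable u w := by
    intro u hu w hw
    let f : biSub Γ (nbhd Γ ↑C ∩ ↑B) (nbhd Γ ↑B ∩ ↑C) →g Γ :=
      ⟨Subtype.val, by
        intro a b hab
        rw [biSub, SimpleGraph.fromRel_adj] at hab
        rcases hab.2 with h' | h'
        · exact h'.1
        · exact h'.1.symm⟩
    exact (hbip.preconnected ⟨u, hu⟩ ⟨w, hw⟩).map f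
  have hreach : ∀ (g : X) (u w : V), Γ.Reachable u w → Γ.Reachable (g • u) (g • w) := by
    intro g u w h
    exact h.map ⟨(g • ·), fun hab => hpres g _ _ hab⟩
  have claimA : ∀ (g : X), ∀ u ∈ g • Sset Γ (↑B : Set V) ↑C,
      ∀ w ∈ g • Sset Γ (↑B : Set V) ↑C, Γ.Reachable u w := by
    intro g u hu w hw
    obtain ⟨u₀, hu₀, rfl⟩ := hu
    obtain ⟨w₀, hw₀, rfl⟩ := hw
    exact hreach g _ _ (reachS u₀ hu₀ w₀ hw₀)
  -- merging lemma: two arcs sharing their first block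
  have merge : ∀ (A C₁ C₂ : ↥P), (quotGraph Γ P).Adj A C₁ → (quotGraph Γ P).Adj A C₂ →
      ∀ u₁ ∈ Sset Γ (↑A : Set V) ↑C₁, ∀ u₂ ∈ Sset Γ (↑A : Set V) ↑C₂,
      Γ.Reachable u₁ u₂ := by
    intro A C₁ C₂ h1 h2 u₁ hu₁ u₂ hu₂
    by_cases hcc : C₁ = C₂
    · subst hcc
      obtain ⟨x, hxB, hxC⟩ := hqsym.2.2 B C A C₁ hBC h1
      have hset : Sset Γ (↑A : Set V) ↑C₁ = x • Sset Γ (↑B : Set V) ↑C := by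
        rw [hxB, hxC, Sset_smul hpres]
      rw [hset] at hu₁ hu₂
      exact claimA x u₁ hu₁ u₂ hu₂
    · obtain ⟨x, hxC, hxB, hxD⟩ := hq2at C B D C₁ A C₂ hBC.symm hBD hCD h1.symm h2 hcc
      obtain ⟨y, hyC, hyB, hyD⟩ := hq2at C B D D B C hBC.symm hBD hCD hBD.symm hBC hCD.symm
      have hS1 : Sset Γ (↑A : Set V) ↑C₁ = x • Sset Γ (↑B : Set V) ↑C := by
        rw [hxB, hxC, Sset_smul hpres]
      have hSD : Sset Γ (↑B : Set V) ↑D = y • Sset Γ (↑B : Set V) ↑C := by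
        conv_lhs => rw [hyB, hyC]
        exact Sset_smul hpres y ↑B ↑C
      have hS2 : Sset Γ (↑A : Set V) ↑C₂ = x • Sset Γ (↑B : Set V) ↑D := by
        rw [hxB, hxD, Sset_smul hpres]
      have h1r : Γ.Reachable u₁ (x • v) := by
        rw [hS1] at hu₁
        exact claimA x u₁ hu₁ (x • v) (Set.smul_mem_smul_set hv1)
      have h2r : Γ.Reachable (x • v) u₂ := by
        rw [hS2, hSD] at hu₂
        have hxv : x • v ∈ x • (y • Sset Γ (↑B : Set V) ↑C) := by
          apply Set.smul_mem_smul_set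
          rw [← hSD]
          exact hvBD
        rw [smul_smul] at hxv hu₂
        exact claimA (x * y) _ hxv _ hu₂
      exact h1r.trans h2r
  -- propagate along walks in the quotient graph
  have Q : ∀ (A A₂ : ↥P) (p : (quotGraph Γ P).Walk A A₂), A₂ = B → ∀ (Cq : ↥P),
      (quotGraph Γ P).Adj A Cq → ∀ u ∈ Sset Γ (↑A : Set V) ↑Cq, Γ.Reachable v u := by
    intro A A₂ p
    induction p with
    | nil =>
      intro hEq Cq hadj u hu
      subst hEq
      exact merge _ C Cq hBC hadj v hv1 u hu
    | @cons A A₁ _ h q ih =>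
      intro hEq Cq hadj u hu
      -- extract an arc of Γ between A and A₁
      have h' := h
      rw [quotGraph, SimpleGraph.fromRel_adj] at h'
      obtain ⟨-, he⟩ := h'
      obtain ⟨u₀, hu₀A, w₀, hw₀A₁, hadj₀⟩ : ∃ a ∈ (↑A : Set V), ∃ b ∈ (↑A₁ : Set V),
          Γ.Adj a b := by
        rcases he with ⟨a, ha, b, hb, hab⟩ | ⟨a, ha, b, hb, hab⟩
        · exact ⟨a, ha, b, hb, hab⟩
        · exact ⟨b, hb, a, ha, hab.symm⟩
      have hu₀nbhd : u₀ ∈ nbhd Γ (↑A₁ : Set V) := mem_nbhd'.2 ⟨w₀, hw₀A₁, hadj₀.symm⟩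
      have hmem1 : u₀ ∈ Sset Γ (↑A₁ : Set V) ↑A := Set.mem_union_right _ ⟨hu₀nbhd, hu₀A⟩
      have hmem2 : u₀ ∈ Sset Γ (↑A : Set V) ↑A₁ := Set.mem_union_left _ ⟨hu₀nbhd, hu₀A⟩
      have hvu₀ : Γ.Reachable v u₀ := ih hEq A h.symm u₀ hmem1
      exact hvu₀.trans (merge A A₁ Cq h hadj u₀ hmem2 u hu)
  -- every vertex is reachable from v
  have main : ∀ u : V, Γ.Reachable v u := by
    intro u
    obtain ⟨x, hx⟩ := hvtrans v u
    have hBmem : (x • (↑B : Set V)) ∈ P := hP.2 x ↑B B.2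
    have hCmem : (x • (↑C : Set V)) ∈ P := hP.2 x ↑C C.2
    let A : ↥P := ⟨x • ↑B, hBmem⟩
    let Cq : ↥P := ⟨x • ↑C, hCmem⟩
    have hadj : (quotGraph Γ P).Adj A Cq := hqsym.1 x B C A Cq hBC rfl rfl
    have hu : u ∈ Sset Γ (↑A : Set V) ↑Cq := by
      have hmem : u ∈ x • Sset Γ (↑B : Set V) ↑C := hx ▸ Set.smul_mem_smul_set hv1
      rwa [show (↑A : Set V) = x • ↑B from rfl, show (↑Cq : Set V) = x • ↑C from rfl,
        Sset_smul hpres]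
    obtain ⟨p⟩ := hqconn.preconnected A B
    exact Q A B p rfl Cq hadj u hu
  have : Nonempty V := ⟨v⟩
  exact ⟨fun a b => (main a).symm.trans (main b)⟩
end
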